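/- arXiv:2011.04410 — 6 statements merged into one kernel-verified Lean document; each statement's English description precedes it below -/
import Mathlib

section
/- The maximal number of 3-term arithmetic progressions in an n-element set of real numbers is ⌈n²/2⌉; that is, for every positive integer n, μ_n(ℝ) = ⌈n²/2⌉, where ℝ carries the usual metric d(x,y) = |x − y|. -/
open Finset

def IsAP3 {M : Type*} [MetricSpace M] (a b c : M) : Prop :=
  dist a b = dist b c ∧ dist b c = dist a c / 2

def AT {M : Type*} [MetricSpace M] (A : Set M) : Set (M × M × M) :=
  {p | p.1 ∈ A ∧ p.2.1 ∈ A ∧ p.2.2 ∈ A ∧ IsAP3 p.1 p.2.1 p.2.2}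

lemma isAP3_iff (a b c : ℝ) : IsAP3 a b c ↔ a + c = 2 * b := by
  constructor
  · rintro ⟨h1, h2⟩
    rw [Real.dist_eq, Real.dist_eq] at h1
    rw [Real.dist_eq, Real.dist_eq] at h2
    rcases abs_cases (a - b) with ⟨e1, _⟩ | ⟨e1, _⟩ <;>
      rcases abs_cases (b - c) with ⟨e2, _⟩ | ⟨e2, _⟩ <;>
        rcases abs_cases (a - c) with ⟨e3, _⟩ | ⟨e3, _⟩ <;>
          rw [e1, e2] at h1 <;> rw [e2, e3] at h2 <;> linarith
  · intro h
    have hb : a - b = (a - c) / 2 := by linarith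
    have hc : b - c = (a - c) / 2 := by linarith
    constructor
    · rw [Real.dist_eq, Real.dist_eq, hb, hc]
    · rw [Real.dist_eq, Real.dist_eq, hc, abs_div]
      norm_num

noncomputable def Tr (A : Finset ℝ) : Finset (ℝ × ℝ × ℝ) :=
  (A ×ˢ A ×ˢ A).filter (fun p => p.1 + p.2.2 = 2 * p.2.1)

lemma AT_coe (A : Finset ℝ) : AT (↑A : Set ℝ) = ↑(Tr A) := by
  ext ⟨a, b, c⟩
  simp only [AT, Tr, Set.mem_setOf_eq, Finset.coe_filter, Finset.mem_product,
    Finset.mem_coe, isAP3_iff]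
  tauto

lemma key_sum (n : ℕ) : n + ∑ i ∈ Finset.range n, 2 * min i (n - 1 - i) = (n ^ 2 + 1) / 2 := by
  induction n using Nat.strong_induction_on with
  | _ n ih =>
    match n with
    | 0 => simp
    | 1 => simp
    | (m + 2) =>
      have h := ih m (by omega)
      rw [Finset.sum_range_succ', Finset.sum_range_succ]
      have h0 : 2 * min 0 (m + 2 - 1 - 0) = 0 := by omega
      have hlast : 2 * min (m + 1) (m + 2 - 1 - (m + 1)) = 0 := by omega
      rw [h0, hlast]
      have hshift : ∀ i ∈ Finset.range m,
          2 * min (i + 1) (m + 2 - 1 - (i + 1)) = 2 * min i (m - 1 - i) + 2 := by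
        intro i hi
        have := Finset.mem_range.mp hi
        omega
      rw [Finset.sum_congr rfl hshift, Finset.sum_add_distrib, Finset.sum_const,
        Finset.card_range, smul_eq_mul]
      obtain ⟨k, hk⟩ : ∃ k, m ^ 2 = k := ⟨_, rfl⟩
      rw [hk] at h
      rw [show (m + 2) ^ 2 = k + 4 * m + 4 by rw [← hk]; ring]
      omega

lemma card_Tr_le (A : Finset ℝ) : (Tr A).card ≤ (A.card ^ 2 + 1) / 2 := by
  classical
  set n := A.card with hn
  have fib : (Tr A).card = ∑ b ∈ A, ((Tr A).filter (fun p => p.2.1 = b)).card := by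
    apply Finset.card_eq_sum_card_fiberwise
    intro p hp
    simp only [Tr, Finset.mem_coe, Finset.mem_filter, Finset.mem_product] at hp
    exact hp.1.2.1
  have fiber_eq : ∀ b ∈ A, ((Tr A).filter (fun p => p.2.1 = b)).card
      = (A.filter (fun a => 2 * b - a ∈ A)).card := by
    intro b hb
    apply Finset.card_nbij' (fun p => p.1) (fun a => (a, b, 2 * b - a))
    · intro p hp
      simp only [Tr, Finset.mem_coe, Finset.mem_filter, Finset.mem_product] at hp ⊢
      obtain ⟨⟨⟨ha, hbm, hc⟩, heq⟩, hmid⟩ := hp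
      refine ⟨ha, ?_⟩
      have h2 : 2 * b - p.1 = p.2.2 := by rw [← hmid]; linarith
      rwa [h2]
    · intro a ha
      simp only [Finset.mem_coe, Finset.mem_filter] at ha
      simp only [Tr, Finset.mem_coe, Finset.mem_filter, Finset.mem_product]
      exact ⟨⟨⟨ha.1, hb, ha.2⟩, by ring⟩, trivial⟩
    · rintro ⟨a', b', c'⟩ hp
      simp only [Tr, Finset.mem_coe, Finset.mem_filter, Finset.mem_product] at hp
      obtain ⟨⟨_, heq⟩, hmid⟩ := hp
      dsimp at heq hmid ⊢
      rw [hmid] at heq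
      have hcc : c' = 2 * b - a' := by linarith
      rw [hmid, hcc]
    · intro a _; rfl
  have bound : ∀ b ∈ A, (A.filter (fun a => 2 * b - a ∈ A)).card
      ≤ 1 + 2 * min ((A.filter (fun a => a < b)).card)
            (n - 1 - (A.filter (fun a => a < b)).card) := by
    intro b hb
    set G := A.filter (fun a => 2 * b - a ∈ A) with hG
    have hbG : b ∈ G := by
      simp only [hG, Finset.mem_filter]
      exact ⟨hb, by rw [show 2 * b - b = b by ring]; exact hb⟩
    have hpart : (A.filter (fun a => a < b)).card + (1 + (A.filter (fun a => b < a)).card) = n := by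
      have h1 := Finset.card_filter_add_card_filter_not (s := A) (p := fun a => a < b)
      have h2 : A.filter (fun a => ¬ a < b) = insert b (A.filter (fun a => b < a)) := by
        ext x
        simp only [Finset.mem_filter, Finset.mem_insert, not_lt]
        constructor
        · rintro ⟨hx, hbx⟩
          rcases eq_or_lt_of_le hbx with h | h
          · exact Or.inl h.symm
          · exact Or.inr ⟨hx, h⟩
        · rintro (rfl | ⟨hx, hbx⟩)
          · exact ⟨hb, le_refl _⟩
          · exact ⟨hx, le_of_lt hbx⟩
      rw [h2, Finset.card_insert_of_notMem (by simp)] at h1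
      omega
    have hswap : (G.filter (fun a => a < b)).card = (G.filter (fun a => b < a)).card := by
      apply Finset.card_nbij' (fun a => 2 * b - a) (fun a => 2 * b - a)
      · intro a ha
        simp only [hG, Finset.mem_coe, Finset.mem_filter, Finset.filter_filter] at ha ⊢
        obtain ⟨ha1, ha2, ha3⟩ := ha
        refine ⟨ha2, ?_, by linarith⟩
        rw [show 2 * b - (2 * b - a) = a by ring]; exact ha1
      · intro a ha
        simp only [hG, Finset.mem_coe, Finset.mem_filter, Finset.filter_filter] at ha ⊢
        obtain ⟨ha1, ha2, ha3⟩ := ha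
        refine ⟨ha2, ?_, by linarith⟩
        rw [show 2 * b - (2 * b - a) = a by ring]; exact ha1
      · intro a _; ring
      · intro a _; ring
    have hdecomp : G.card = (G.filter (fun a => a < b)).card + (1 + (G.filter (fun a => b < a)).card) := by
      have h1 := Finset.card_filter_add_card_filter_not (s := G) (p := fun a => a < b)
      have h2 : G.filter (fun a => ¬ a < b) = insert b (G.filter (fun a => b < a)) := by
        ext x
        simp only [Finset.mem_filter, Finset.mem_insert, not_lt]
        constructor
        · rintro ⟨hx, hbx⟩
          rcases eq_or_lt_of_le hbx with h | h
          · exact Or.inl h.symm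
          · exact Or.inr ⟨hx, h⟩
        · rintro (rfl | ⟨hx, hbx⟩)
          · exact ⟨hbG, le_refl _⟩
          · exact ⟨hx, le_of_lt hbx⟩
      rw [h2, Finset.card_insert_of_notMem (by simp)] at h1
      omega
    have hGL : (G.filter (fun a => a < b)).card ≤ (A.filter (fun a => a < b)).card := by
      apply Finset.card_le_card
      intro x hx
      simp only [hG, Finset.mem_filter, Finset.filter_filter] at hx ⊢
      tauto
    have hGR : (G.filter (fun a => b < a)).card ≤ (A.filter (fun a => b < a)).card := by
      apply Finset.card_le_card
      intro x hx
      simp only [hG, Finset.mem_filter, Finset.filter_filter] at hx ⊢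
      tauto
    omega
  set L : ℝ → ℕ := fun b => (A.filter (fun a => a < b)).card with hLdef
  have hmono : ∀ x ∈ A, ∀ y ∈ A, x < y → L x < L y := by
    intro x hx y hy hxy
    apply Finset.card_lt_card
    rw [Finset.ssubset_iff_of_subset]
    · exact ⟨x, by simp [hx, hxy], by simp⟩
    · intro a ha
      simp only [Finset.mem_filter] at ha ⊢
      exact ⟨ha.1, lt_trans ha.2 hxy⟩
  have hinj : Set.InjOn L A := by
    intro x hx y hy hxy
    by_contra hne
    rcases lt_or_gt_of_ne hne with h | h
    · exact absurd hxy (Nat.ne_of_lt (hmono x hx y hy h))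
    · exact absurd hxy.symm (Nat.ne_of_lt (hmono y hy x hx h))
  have himage : A.image L = Finset.range n := by
    apply Finset.eq_of_subset_of_card_le
    · intro i hi
      simp only [Finset.mem_image] at hi
      obtain ⟨b, hb, rfl⟩ := hi
      rw [Finset.mem_range]
      show (A.filter (fun a => a < b)).card < n
      have hsub : A.filter (fun a => a < b) ⊆ A.erase b := by
        intro x hx
        simp only [Finset.mem_filter] at hx
        exact Finset.mem_erase.mpr ⟨ne_of_lt hx.2, hx.1⟩
      have hle := Finset.card_le_card hsub
      rw [Finset.card_erase_of_mem hb] at hle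
      have hpos : 0 < n := Finset.card_pos.mpr ⟨b, hb⟩
      omega
    · rw [Finset.card_range, Finset.card_image_of_injOn hinj]
  have hsum : ∑ b ∈ A, 2 * min (L b) (n - 1 - L b)
      = ∑ i ∈ Finset.range n, 2 * min i (n - 1 - i) := by
    rw [← himage, Finset.sum_image (fun x hx y hy => hinj hx hy)]
  calc (Tr A).card = ∑ b ∈ A, ((Tr A).filter (fun p => p.2.1 = b)).card := fib
    _ = ∑ b ∈ A, (A.filter (fun a => 2 * b - a ∈ A)).card := Finset.sum_congr rfl fiber_eq
    _ ≤ ∑ b ∈ A, (1 + 2 * min (L b) (n - 1 - L b)) := Finset.sum_le_sum bound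
    _ = n + ∑ b ∈ A, 2 * min (L b) (n - 1 - L b) := by
        rw [Finset.sum_add_distrib, Finset.sum_const, smul_eq_mul, mul_one]
    _ = n + ∑ i ∈ Finset.range n, 2 * min i (n - 1 - i) := by rw [hsum]
    _ = (n ^ 2 + 1) / 2 := key_sum n

noncomputable def En  (n : ℕ) : Finset ℝ := (Finset.range n).image (fun i : ℕ => (i : ℝ))

lemma card_En (n : ℕ) : (En n).card = n := by
  rw [En, Finset.card_image_of_injective _ Nat.cast_injective, Finset.card_range]

lemma card_even_filter (n : ℕ) : ((Finset.range n).filter (fun i => i % 2 = 0)).card = (n + 1) / 2 := by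
  induction n with
  | zero => simp
  | succ m ih =>
    rw [Finset.range_add_one, Finset.filter_insert]
    split
    · rw [Finset.card_insert_of_notMem (by simp)]
      omega
    · omega

lemma card_odd_filter (n : ℕ) : ((Finset.range n).filter (fun i => i % 2 = 1)).card = n / 2 := by
  induction n with
  | zero => simp
  | succ m ih =>
    rw [Finset.range_add_one, Finset.filter_insert]
    split
    · rw [Finset.card_insert_of_notMem (by simp)]
      omega
    · omega

lemma card_Tr_En (n : ℕ) : (Tr (En n)).card = (n ^ 2 + 1) / 2 := by
  classical
  have hP : ((Finset.range n ×ˢ Finset.range n).filter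
      (fun q : ℕ × ℕ => (q.1 + q.2) % 2 = 0)).card = (Tr (En n)).card := by
    apply Finset.card_nbij (fun q => ((q.1 : ℝ), ((q.1 : ℝ) + (q.2 : ℝ)) / 2, (q.2 : ℝ)))
    · rintro ⟨i, k⟩ hq
      simp only [Finset.mem_coe, Finset.mem_filter, Finset.mem_product, Finset.mem_range] at hq
      obtain ⟨⟨hi, hk⟩, hpar⟩ := hq
      simp only [Tr, Finset.mem_coe, Finset.mem_filter, Finset.mem_product]
      refine ⟨⟨?_, ?_, ?_⟩, by ring⟩
      · exact Finset.mem_image.mpr ⟨i, Finset.mem_range.mpr hi, rfl⟩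
      · refine Finset.mem_image.mpr ⟨(i + k) / 2, Finset.mem_range.mpr (by omega), ?_⟩
        have h2 : ((i + k) / 2 : ℕ) * 2 = i + k := by omega
        have := congrArg (fun t : ℕ => (t : ℝ)) h2
        push_cast at this
        linarith
      · exact Finset.mem_image.mpr ⟨k, Finset.mem_range.mpr hk, rfl⟩
    · rintro ⟨i, k⟩ hq ⟨i', k'⟩ hq' h
      simp only [Prod.mk.injEq] at h
      obtain ⟨h1, _, h3⟩ := h
      exact Prod.ext (by exact_mod_cast h1) (by exact_mod_cast h3)
    · rintro ⟨a, b, c⟩ hp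
      simp only [Tr, Finset.coe_filter, Finset.mem_product, Set.mem_setOf_eq] at hp
      obtain ⟨⟨ha, hb, hc⟩, heq⟩ := hp
      simp only [En, Finset.mem_coe, Finset.mem_image, Finset.mem_range] at ha hb hc
      obtain ⟨i, hi, rfl⟩ := ha
      obtain ⟨j, hj, rfl⟩ := hb
      obtain ⟨k, hk, rfl⟩ := hc
      have hik : i + k = 2 * j := by exact_mod_cast heq
      refine ⟨(i, k), ?_, ?_⟩
      · simp only [Finset.coe_filter, Finset.mem_product, Finset.mem_range, Set.mem_setOf_eq]
        exact ⟨⟨hi, hk⟩, by omega⟩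
      · simp only [Prod.mk.injEq]
        refine ⟨trivial, ?_, trivial⟩
        have : (i : ℝ) + (k : ℝ) = 2 * (j : ℝ) := by exact_mod_cast heq
        linarith
  rw [← hP]
  have hsplit : ((Finset.range n ×ˢ Finset.range n).filter
      (fun q : ℕ × ℕ => (q.1 + q.2) % 2 = 0))
      = ((Finset.range n).filter (fun i => i % 2 = 0)) ×ˢ ((Finset.range n).filter (fun i => i % 2 = 0))
        ∪ ((Finset.range n).filter (fun i => i % 2 = 1)) ×ˢ ((Finset.range n).filter (fun i => i % 2 = 1)) := by
    ext ⟨i, k⟩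
    simp only [Finset.mem_filter, Finset.mem_product, Finset.mem_union, Finset.mem_range]
    omega
  have hdisj : Disjoint
      (((Finset.range n).filter (fun i => i % 2 = 0)) ×ˢ ((Finset.range n).filter (fun i => i % 2 = 0)))
      (((Finset.range n).filter (fun i => i % 2 = 1)) ×ˢ ((Finset.range n).filter (fun i => i % 2 = 1))) := by
    rw [Finset.disjoint_left]
    rintro ⟨i, k⟩ h1 h2
    simp only [Finset.mem_product, Finset.mem_filter] at h1 h2
    omega
  rw [hsplit, Finset.card_union_of_disjoint hdisj, Finset.card_product, Finset.card_product,
    card_even_filter, card_odd_filter]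
  rcases Nat.even_or_odd n with ⟨m, rfl⟩ | ⟨m, rfl⟩
  · rw [show (m + m + 1) / 2 = m by omega, show (m + m) / 2 = m by omega]
    have h2 : (m + m) ^ 2 = 4 * (m * m) := by ring
    rw [h2]
    have h3 : m * m = m * m := rfl
    omega
  · rw [show (2 * m + 1 + 1) / 2 = m + 1 by omega, show (2 * m + 1) / 2 = m by omega]
    have h2 : (2 * m + 1) ^ 2 = 4 * (m * m) + 4 * m + 1 := by ring
    rw [h2]
    have h4 : (m + 1) * (m + 1) = m * m + 2 * m + 1 := by ring
    omega

/-- The maximal number of 3-term arithmetic progressions in an `n`-element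
set of real numbers is `⌈n²/2⌉`. -/
theorem max_AP3_real (n : ℕ) (hn : 0 < n) :
    IsGreatest {k : ℕ | ∃ A : Set ℝ, A.Finite ∧ A.ncard = n ∧ (AT A).ncard = k}
      ((n ^ 2 + 1) / 2) := by
  constructor
  · refine ⟨↑(En n), (En n).finite_toSet, ?_, ?_⟩
    · rw [Set.ncard_coe_finset, card_En]
    · rw [AT_coe, Set.ncard_coe_finset, card_Tr_En]
  · rintro k ⟨A, hA, hcard, hAT⟩
    have hAeq : A = ↑hA.toFinset := hA.coe_toFinset.symm
    rw [hAeq] at hcard hAT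
    rw [Set.ncard_coe_finset] at hcard
    rw [AT_coe, Set.ncard_coe_finset] at hAT
    rw [← hAT, ← hcard]
    exact card_Tr_le hA.toFinset
end

section
/- For every positive integer k and every positive integer n, the maximal number of 3-term arithmetic progressions in an n-element subset of k-dimensional Euclidean space is ⌈n²/2⌉; that is, μ_n(ℝᵏ) = ⌈n²/2⌉, where ℝᵏ carries the Euclidean metric. -/
lemma card_even_range (n : ℕ) : ((Finset.range n).filter (fun i => i % 2 = 0)).card = (n+1)/2 := by
  induction n with
  | zero => simp
  | succ m ih =>
    rw [Finset.range_add_one, Finset.filter_insert]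
    rcases Nat.mod_two_eq_zero_or_one m with h | h
    · rw [if_pos h, Finset.card_insert_of_notMem (by simp), ih]
      omega
    · rw [if_neg (by omega), ih]
      omega

lemma card_odd_range (n : ℕ) : ((Finset.range n).filter (fun i => ¬ i % 2 = 0)).card = n/2 := by
  have h := Finset.card_filter_add_card_filter_not
    (s := Finset.range n) (p := fun i => i % 2 = 0)
  have h2 := card_even_range n
  simp only [Finset.card_range] at h
  omega

lemma parity_count (n : ℕ) :
    (((Finset.range n) ×ˢ (Finset.range n)).filter (fun q => (q.1 + q.2) % 2 = 0)).card
      = (n^2+1)/2 := by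
  have hsplit : ((Finset.range n) ×ˢ (Finset.range n)).filter (fun q => (q.1 + q.2) % 2 = 0)
      = (((Finset.range n).filter (fun i => i % 2 = 0)) ×ˢ ((Finset.range n).filter (fun i => i % 2 = 0)))
        ∪ (((Finset.range n).filter (fun i => ¬ i % 2 = 0)) ×ˢ ((Finset.range n).filter (fun i => ¬ i % 2 = 0))) := by
    ext ⟨a, b⟩
    simp only [Finset.mem_filter, Finset.mem_product, Finset.mem_union, Finset.mem_range]
    omega
  have hdisj : Disjoint
      (((Finset.range n).filter (fun i => i % 2 = 0)) ×ˢ ((Finset.range n).filter (fun i => i % 2 = 0)))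
      (((Finset.range n).filter (fun i => ¬ i % 2 = 0)) ×ˢ ((Finset.range n).filter (fun i => ¬ i % 2 = 0))) := by
    rw [Finset.disjoint_left]
    rintro ⟨a, b⟩ h1 h2
    simp only [Finset.mem_product, Finset.mem_filter] at h1 h2
    exact h2.1.2 h1.1.2
  rw [hsplit, Finset.card_union_of_disjoint hdisj, Finset.card_product, Finset.card_product,
    card_even_range, card_odd_range]
  rcases Nat.even_or_odd n with ⟨m, rfl⟩ | ⟨m, rfl⟩
  · have h1 : (m + m + 1) / 2 = m := by omega
    have h2 : (m + m) / 2 = m := by omega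
    rw [h1, h2]
    have h3 : (m+m)^2 = 4 * (m*m) := by ring
    rw [h3]
    generalize m * m = M
    omega
  · have h1 : (2*m + 1 + 1) / 2 = m + 1 := by omega
    have h2 : (2*m + 1) / 2 = m := by omega
    rw [h1, h2]
    have h3 : (2*m+1)^2 = 4 * (m*m) + 4*m + 1 := by ring
    have h4 : (m+1)*(m+1) = m*m + 2*m+1 := by ring
    rw [h3, h4]
    generalize m * m = M
    omega

lemma sum_min_formula (n : ℕ) :
    ∑ j ∈ Finset.range n, (2 * min j (n - 1 - j) + 1) = (n ^ 2 + 1) / 2 := by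
  induction n using Nat.strong_induction_on with
  | _ n ih =>
    match n with
    | 0 => simp
    | 1 => simp
    | (m+2) =>
      have h1 : ∀ i ∈ Finset.range m,
          2 * min (i+1) (m + 2 - 1 - (i+1)) + 1 = (2 * min i (m - 1 - i) + 1) + 2 := by
        intro i hi
        simp only [Finset.mem_range] at hi
        have h2 : m + 2 - 1 - (i+1) = (m - 1 - i) + 1 := by omega
        rw [h2, Nat.succ_min_succ]
        omega
      have key : ∑ j ∈ Finset.range (m+2), (2 * min j (m + 2 - 1 - j) + 1)
          = (∑ j ∈ Finset.range m, (2 * min j (m - 1 - j) + 1)) + (2*m + 2) := by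
        rw [Finset.sum_range_succ', Finset.sum_range_succ, Finset.sum_congr rfl h1,
          Finset.sum_add_distrib, Finset.sum_const]
        simp [Nat.min_def]
        omega
      rw [key, ih m (by omega)]
      have : (m+2)^2 = m^2 + (4*m + 4) := by ring
      omega

lemma oneD_bound (B : Finset ℝ) :
    ((B ×ˢ B).filter (fun q : ℝ × ℝ => (q.1 + q.2) / 2 ∈ B)).card ≤ (B.card ^ 2 + 1) / 2 := by
  classical
  set n := B.card with hn
  set P := (B ×ˢ B).filter (fun q : ℝ × ℝ => (q.1 + q.2) / 2 ∈ B) with hP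
  have hmem : ∀ q ∈ P, (q.1 + q.2) / 2 ∈ B := fun q hq => (Finset.mem_filter.mp hq).2
  have hcard : P.card = ∑ b ∈ B, (P.filter (fun q => (q.1 + q.2)/2 = b)).card :=
    Finset.card_eq_sum_card_fiberwise hmem
  have hfiber : ∀ b ∈ B, (P.filter (fun q => (q.1 + q.2)/2 = b)).card
      = (B.filter (fun s => 2*b - s ∈ B)).card := by
    intro b hb
    apply Finset.card_bij (fun q _ => q.1)
    · rintro ⟨s, t⟩ hq
      simp only [Finset.mem_filter, Finset.mem_product, hP] at hq ⊢
      obtain ⟨⟨⟨hs, ht⟩, -⟩, hmid⟩ := hq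
      refine ⟨hs, ?_⟩
      have : 2*b - s = t := by linarith
      rwa [this]
    · rintro ⟨s, t⟩ hq ⟨s', t'⟩ hq' h
      simp only [Finset.mem_filter, Finset.mem_product, hP] at hq hq'
      dsimp at h
      subst h
      have : t = t' := by
        have h1 := hq.2; have h2 := hq'.2; linarith
      rw [this]
    · intro s hs
      simp only [Finset.mem_filter] at hs
      refine ⟨(s, 2*b - s), ?_, rfl⟩
      simp only [Finset.mem_filter, Finset.mem_product, hP]
      have heq : (s + (2*b - s))/2 = b := by ring
      exact ⟨⟨⟨hs.1, hs.2⟩, by rw [heq]; exact hb⟩, heq⟩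
  set belowc : ℝ → ℕ := fun b => (B.filter (fun s => s < b)).card with hbel
  have habove : ∀ b ∈ B, (B.filter (fun s => b < s)).card = n - 1 - belowc b := by
    intro b hb
    have h3 := Finset.card_filter_add_card_filter_not
      (s := B) (p := fun s => s < b)
    have h4 : B.filter (fun s => ¬ s < b) = insert b (B.filter (fun s => b < s)) := by
      ext s
      simp only [Finset.mem_filter, Finset.mem_insert, not_lt]
      constructor
      · rintro ⟨hsB, hbs⟩
        rcases eq_or_lt_of_le hbs with h | h
        · exact Or.inl h.symm
        · exact Or.inr ⟨hsB, h⟩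
      · rintro (rfl | ⟨hsB, h⟩)
        · exact ⟨hb, le_refl _⟩
        · exact ⟨hsB, h.le⟩
    have h5 : b ∉ B.filter (fun s => b < s) := by
      simp only [Finset.mem_filter]
      exact fun h => lt_irrefl b h.2
    rw [h4, Finset.card_insert_of_notMem h5] at h3
    have h6 : belowc b = (B.filter (fun s => s < b)).card := rfl
    have hb1 : 1 ≤ n := Finset.card_pos.mpr ⟨b, hb⟩
    omega
  have hSbound : ∀ b ∈ B, (B.filter (fun s => 2*b - s ∈ B)).card
      ≤ 2 * min (belowc b) (n - 1 - belowc b) + 1 := by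
    intro b hb
    set S := B.filter (fun s => 2*b - s ∈ B) with hS
    set L := S.filter (fun s => s < b) with hL
    set R := S.filter (fun s => b < s) with hR
    have hLR : L.card = R.card := by
      apply Finset.card_bij (fun s _ => 2*b - s)
      · intro s hsl
        simp only [hL, hR, hS, Finset.mem_filter] at hsl ⊢
        obtain ⟨⟨hsB, hsr⟩, hslt⟩ := hsl
        have he : 2*b - (2*b - s) = s := by ring
        exact ⟨⟨hsr, by rw [he]; exact hsB⟩, by linarith⟩
      · intro s _ s' _ h
        linarith
      · intro t ht
        simp only [hR, hS, Finset.mem_filter] at ht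
        obtain ⟨⟨htB, htr⟩, htlt⟩ := ht
        have he : 2*b - (2*b - t) = t := by ring
        refine ⟨2*b - t, ?_, he⟩
        simp only [hL, hS, Finset.mem_filter]
        exact ⟨⟨htr, by rw [he]; exact htB⟩, by linarith⟩
    have hsub : S ⊆ L ∪ R ∪ {b} := by
      intro s hs
      simp only [hL, hR, Finset.mem_union, Finset.mem_filter, Finset.mem_singleton]
      rcases lt_trichotomy s b with h | h | h
      · exact Or.inl (Or.inl ⟨hs, h⟩)
      · exact Or.inr h
      · exact Or.inl (Or.inr ⟨hs, h⟩)
    have hcard2 : S.card ≤ L.card + R.card + 1 := by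
      calc S.card ≤ (L ∪ R ∪ {b}).card := Finset.card_le_card hsub
        _ ≤ (L ∪ R).card + ({b} : Finset ℝ).card := Finset.card_union_le _ _
        _ ≤ L.card + R.card + 1 := by
            have := Finset.card_union_le L R
            simp only [Finset.card_singleton]
            omega
    have hLle : L.card ≤ belowc b := by
      apply Finset.card_le_card
      intro s hs
      simp only [hL, hS, Finset.mem_filter] at hs ⊢
      exact ⟨hs.1.1, hs.2⟩
    have hRle : R.card ≤ n - 1 - belowc b := by
      rw [← habove b hb]
      apply Finset.card_le_card
      intro s hs
      simp only [hR, hS, Finset.mem_filter] at hs ⊢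
      exact ⟨hs.1.1, hs.2⟩
    have : L.card ≤ min (belowc b) (n - 1 - belowc b) := le_min hLle (hLR ▸ hRle)
    omega
  have hmono : ∀ x ∈ B, ∀ y ∈ B, x < y → belowc x < belowc y := by
    intro x hx y hy hxy
    have hsub : insert x (B.filter (fun s => s < x)) ⊆ B.filter (fun s => s < y) := by
      intro s hs
      rcases Finset.mem_insert.mp hs with rfl | hs
      · exact Finset.mem_filter.mpr ⟨hx, hxy⟩
      · have := Finset.mem_filter.mp hs
        exact Finset.mem_filter.mpr ⟨this.1, this.2.trans hxy⟩
    have hx2 : x ∉ B.filter (fun s => s < x) := by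
      simp only [Finset.mem_filter]
      exact fun h => lt_irrefl x h.2
    have := Finset.card_le_card hsub
    rw [Finset.card_insert_of_notMem hx2] at this
    simpa [hbel] using this
  have hinj : Set.InjOn belowc B := by
    intro x hx y hy h
    by_contra hne
    rcases Ne.lt_or_gt hne with hlt | hlt
    · exact absurd h (Nat.ne_of_lt (hmono x hx y hy hlt))
    · exact absurd h.symm (Nat.ne_of_lt (hmono y hy x hx hlt))
  have himage : B.image belowc = Finset.range n := by
    apply Finset.eq_of_subset_of_card_le
    · intro j hj
      obtain ⟨b, hb, rfl⟩ := Finset.mem_image.mp hj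
      have hss : B.filter (fun s => s < b) ⊆ B.erase b := by
        intro s hs
        have := Finset.mem_filter.mp hs
        exact Finset.mem_erase.mpr ⟨ne_of_lt this.2, this.1⟩
      have hle := Finset.card_le_card hss
      rw [Finset.card_erase_of_mem hb] at hle
      have hb1 : 1 ≤ n := Finset.card_pos.mpr ⟨b, hb⟩
      simp only [Finset.mem_range, hbel]
      omega
    · rw [Finset.card_range, Finset.card_image_of_injOn hinj]
  calc P.card = ∑ b ∈ B, (P.filter (fun q => (q.1 + q.2)/2 = b)).card := hcard
    _ = ∑ b ∈ B, (B.filter (fun s => 2*b - s ∈ B)).card := Finset.sum_congr rfl hfiber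
    _ ≤ ∑ b ∈ B, (2 * min (belowc b) (n - 1 - belowc b) + 1) := Finset.sum_le_sum hSbound
    _ = ∑ j ∈ B.image belowc, (2 * min j (n - 1 - j) + 1) := by
        rw [Finset.sum_image (fun x hx y hy h => hinj hx hy h)]
    _ = ∑ j ∈ Finset.range n, (2 * min j (n - 1 - j) + 1) := by rw [himage]
    _ = (n ^ 2 + 1) / 2 := sum_min_formula n
lemma isAP3_iff_s1 {E : Type*} [NormedAddCommGroup E] [InnerProductSpace ℝ E]
    (a b c : E) : IsAP3 a b c ↔ b = midpoint ℝ a c := by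
  constructor
  · rintro ⟨h1, h2⟩
    have hxy : dist a b = (1/2 : ℝ) * dist a c := by rw [h1, h2]; ring
    have hyz : dist b c = (1 - (1/2 : ℝ)) * dist a c := by rw [h2]; ring
    have := eq_lineMap_of_dist_eq_mul_of_dist_eq_mul hxy hyz
    have hm : midpoint ℝ a c = AffineMap.lineMap a c (1/2 : ℝ) := by
      rw [midpoint, invOf_eq_inv]
      norm_num
    rw [hm]
    exact this
  · rintro rfl
    constructor
    · rw [dist_left_midpoint, dist_midpoint_right]
    · rw [dist_midpoint_right]
      simp [Real.norm_two]
      ring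

lemma exists_injOn_functional {E : Type*} [NormedAddCommGroup E] [InnerProductSpace ℝ E]
    (A : Set E) (hA : A.Finite) :
    ∃ f : E → ℝ, Set.InjOn f A ∧ ∀ x y : E, f (midpoint ℝ x y) = (f x + f y) / 2 := by
  classical
  have hD : ({d : E | ∃ a ∈ A, ∃ c ∈ A, a ≠ c ∧ d = a - c}).Finite := by
    apply Set.Finite.subset (hA.image2 (fun a c => a - c) hA)
    rintro d ⟨a, ha, c, hc, -, rfl⟩
    exact Set.mem_image2_of_mem ha hc
  set D := hD.toFinset with hDdef
  set s : Finset (Subspace ℝ E) := D.image (fun d => LinearMap.ker (innerSL ℝ d).toLinearMap) with hs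
  have htop : ⊤ ∉ s := by
    intro h
    obtain ⟨d, hd, hker⟩ := Finset.mem_image.mp h
    rw [Set.Finite.mem_toFinset] at hd
    obtain ⟨a, ha, c, hc, hne, rfl⟩ := hd
    have : (a - c) ∈ LinearMap.ker (innerSL ℝ (a - c)).toLinearMap := hker ▸ Submodule.mem_top
    rw [LinearMap.mem_ker] at this
    simp only [ContinuousLinearMap.coe_coe, innerSL_apply_apply] at this
    rw [inner_self_eq_zero, sub_eq_zero] at this
    exact hne this
  have hne := Subspace.biUnion_ne_univ_of_top_notMem htop
  have : ∃ v : E, v ∉ ⋃ p ∈ s, (p : Set E) := by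
    by_contra h
    push_neg at h
    exact hne (Set.eq_univ_of_forall h)
  obtain ⟨v, hv⟩ := this
  refine ⟨fun x => inner ℝ v x, ?_, ?_⟩
  · intro a ha c hc h
    by_contra hne'
    have hd : a - c ∈ D := by
      rw [Set.Finite.mem_toFinset]
      exact ⟨a, ha, c, hc, hne', rfl⟩
    have hker : v ∈ LinearMap.ker (innerSL ℝ (a - c)).toLinearMap := by
      rw [LinearMap.mem_ker]
      simp only [ContinuousLinearMap.coe_coe, innerSL_apply_apply]
      rw [real_inner_comm]
      have : (inner ℝ v (a - c) : ℝ) = inner ℝ v a - inner ℝ v c := inner_sub_right v a c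
      simp only at h
      rw [this, h, sub_self]
    exact hv (Set.mem_biUnion (Finset.mem_image_of_mem _ hd) hker)
  · intro x y
    simp only [midpoint_eq_smul_add, invOf_eq_inv]
    rw [inner_smul_right, inner_add_right]
    ring
lemma AT_eq_image {E : Type*} [NormedAddCommGroup E] [InnerProductSpace ℝ E] (A : Set E) :
    AT A = (fun p : E × E => (p.1, midpoint ℝ p.1 p.2, p.2)) ''
      {p : E × E | p.1 ∈ A ∧ p.2 ∈ A ∧ midpoint ℝ p.1 p.2 ∈ A} := by
  ext ⟨a, b, c⟩
  constructor
  · rintro ⟨ha, hb, hc, hap⟩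
    have hb' : b = midpoint ℝ a c := (isAP3_iff_s1 a b c).mp hap
    exact ⟨(a, c), ⟨ha, hc, hb' ▸ hb⟩, by simp [← hb']⟩
  · rintro ⟨⟨x, z⟩, ⟨hx, hz, hm⟩, heq⟩
    obtain ⟨rfl, rfl, rfl⟩ : x = a ∧ midpoint ℝ x z = b ∧ z = c := by
      simpa [Prod.ext_iff] using heq
    exact ⟨hx, hm, hz, (isAP3_iff_s1 _ _ _).mpr rfl⟩

lemma AT_ncard {E : Type*} [NormedAddCommGroup E] [InnerProductSpace ℝ E] (A : Set E) :
    (AT A).ncard = {p : E × E | p.1 ∈ A ∧ p.2 ∈ A ∧ midpoint ℝ p.1 p.2 ∈ A}.ncard := by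
  rw [AT_eq_image]
  apply Set.ncard_image_of_injective
  intro p q h
  simp only [Prod.ext_iff] at h
  exact Prod.ext h.1 h.2.2

lemma lower_witness (k n : ℕ) (hk : 0 < k) :
    ∃ A : Set (EuclideanSpace ℝ (Fin k)), A.Finite ∧ A.ncard = n ∧
      (AT A).ncard = (n ^ 2 + 1) / 2 := by
  classical
  set e : EuclideanSpace ℝ (Fin k) := EuclideanSpace.single ⟨0, hk⟩ 1 with he
  have hens : e ≠ 0 := by
    intro h
    have := congrArg (fun v : EuclideanSpace ℝ (Fin k) => v ⟨0, hk⟩) h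
    simp [he, EuclideanSpace.single_apply] at this
  have hsmul_inj : Function.Injective (fun t : ℝ => t • e) := by
    intro t t' h
    have h0 : (t - t') • e = 0 := by
      rw [sub_smul, sub_eq_zero]
      exact h
    rcases smul_eq_zero.mp h0 with h1 | h1
    · linarith [sub_eq_zero.mp h1]
    · exact absurd h1 hens
  set ι : ℕ → EuclideanSpace ℝ (Fin k) := fun i => (i : ℝ) • e with hι
  have hι_inj : Function.Injective ι := by
    intro i j h
    exact Nat.cast_injective (hsmul_inj h)
  set A : Set (EuclideanSpace ℝ (Fin k)) := ↑((Finset.range n).image ι) with hA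
  have hAfin : A.Finite := (Finset.range n).image ι |>.finite_toSet
  have hmemA : ∀ x, x ∈ A ↔ ∃ i < n, ι i = x := by
    intro x
    simp [hA, Finset.mem_image, Finset.mem_range]
  -- midpoint characterization
  have hmid : ∀ i j : ℕ, midpoint ℝ (ι i) (ι j) = ((i + j : ℝ) / 2) • e := by
    intro i j
    rw [midpoint_eq_smul_add, hι]
    simp only [invOf_eq_inv, ← add_smul, smul_smul]
    congr 1
    ring
  have hmid_mem : ∀ i j : ℕ, i < n → j < n →
      (midpoint ℝ (ι i) (ι j) ∈ A ↔ (i + j) % 2 = 0) := by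
    intro i j hi hj
    rw [hmid]
    constructor
    · intro h
      obtain ⟨m, hm, hme⟩ := (hmemA _).mp h
      have : (m : ℝ) = (i + j : ℝ) / 2 := hsmul_inj hme
      have h2 : ((2 * m : ℕ) : ℝ) = ((i + j : ℕ) : ℝ) := by push_cast; linarith
      have := Nat.cast_injective h2
      omega
    · intro h
      refine (hmemA _).mpr ⟨(i + j) / 2, by omega, ?_⟩
      have h2 : 2 * ((i + j) / 2) = i + j := by omega
      show (((i + j) / 2 : ℕ) : ℝ) • e = _
      congr 1
      have := congrArg (fun t : ℕ => (t : ℝ)) h2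
      push_cast at this
      linarith
  -- the pair set
  set PN : Finset (ℕ × ℕ) :=
    ((Finset.range n) ×ˢ (Finset.range n)).filter (fun q => (q.1 + q.2) % 2 = 0) with hPN
  have hpairs : {p : EuclideanSpace ℝ (Fin k) × EuclideanSpace ℝ (Fin k) |
        p.1 ∈ A ∧ p.2 ∈ A ∧ midpoint ℝ p.1 p.2 ∈ A}
      = (fun q : ℕ × ℕ => (ι q.1, ι q.2)) '' ↑PN := by
    ext ⟨x, y⟩
    constructor
    · rintro ⟨hx, hy, hm⟩
      obtain ⟨i, hi, rfl⟩ := (hmemA x).mp hx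
      obtain ⟨j, hj, rfl⟩ := (hmemA y).mp hy
      refine ⟨(i, j), ?_, rfl⟩
      simp only [hPN, Finset.coe_filter, Finset.mem_product, Finset.mem_range, Set.mem_setOf_eq]
      exact ⟨⟨hi, hj⟩, (hmid_mem i j hi hj).mp hm⟩
    · rintro ⟨⟨i, j⟩, hq, heq⟩
      simp only [hPN, Finset.coe_filter, Finset.mem_product, Finset.mem_range,
        Set.mem_setOf_eq] at hq
      obtain ⟨⟨hi, hj⟩, hpar⟩ := hq
      obtain ⟨rfl, rfl⟩ : ι i = x ∧ ι j = y := by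
        simpa [Prod.ext_iff] using heq
      exact ⟨(hmemA _).mpr ⟨i, hi, rfl⟩, (hmemA _).mpr ⟨j, hj, rfl⟩,
        (hmid_mem i j hi hj).mpr hpar⟩
  refine ⟨A, hAfin, ?_, ?_⟩
  · rw [hA, Set.ncard_coe_finset, Finset.card_image_of_injective _ hι_inj,
      Finset.card_range]
  · rw [AT_ncard, hpairs]
    rw [Set.ncard_image_of_injective _ (fun p q h => ?_), Set.ncard_coe_finset]
    · exact parity_count n
    · simp only [Prod.ext_iff] at h
      exact Prod.ext (hι_inj h.1) (hι_inj h.2)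

lemma upper_bound {E : Type*} [NormedAddCommGroup E] [InnerProductSpace ℝ E]
    (A : Set E) (hA : A.Finite) :
    (AT A).ncard ≤ (A.ncard ^ 2 + 1) / 2 := by
  classical
  obtain ⟨f, hinj, hfm⟩ := exists_injOn_functional A hA
  set Pairs : Set (E × E) := {p : E × E | p.1 ∈ A ∧ p.2 ∈ A ∧ midpoint ℝ p.1 p.2 ∈ A}
    with hPairs
  have hPfin : Pairs.Finite := by
    apply (hA.prod hA).subset
    rintro ⟨x, y⟩ ⟨h1, h2, -⟩
    exact ⟨h1, h2⟩
  set B : Finset ℝ := hA.toFinset.image f with hB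
  have hBcard : B.card = A.ncard := by
    rw [hB, Finset.card_image_of_injOn
        (fun x hx y hy h => hinj (by simpa using hx) (by simpa using hy) h),
      Set.ncard_eq_toFinset_card _ hA]
  set ψ : E × E → ℝ × ℝ := fun p => (f p.1, f p.2) with hψ
  have hψinj : Set.InjOn ψ Pairs := by
    rintro ⟨x, y⟩ ⟨hx, hy, -⟩ ⟨x', y'⟩ ⟨hx', hy', -⟩ h
    simp only [hψ, Prod.ext_iff] at h
    exact Prod.ext (hinj hx hx' h.1) (hinj hy hy' h.2)
  have hsub : ψ '' Pairs ⊆ ↑((B ×ˢ B).filter (fun q : ℝ × ℝ => (q.1 + q.2) / 2 ∈ B)) := by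
    rintro q ⟨⟨x, y⟩, ⟨hx, hy, hm⟩, rfl⟩
    simp only [Finset.coe_filter, Set.mem_setOf_eq, Finset.mem_product]
    have hfx : f x ∈ B := Finset.mem_image_of_mem f (hA.mem_toFinset.mpr hx)
    have hfy : f y ∈ B := Finset.mem_image_of_mem f (hA.mem_toFinset.mpr hy)
    refine ⟨⟨hfx, hfy⟩, ?_⟩
    show (f x + f y) / 2 ∈ B
    rw [← hfm x y]
    exact Finset.mem_image_of_mem f (hA.mem_toFinset.mpr hm)
  calc (AT A).ncard = Pairs.ncard := AT_ncard A
    _ = (ψ '' Pairs).ncard := (Set.ncard_image_of_injOn hψinj).symm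
    _ ≤ (↑((B ×ˢ B).filter (fun q : ℝ × ℝ => (q.1 + q.2) / 2 ∈ B)) : Set (ℝ × ℝ)).ncard := by
        exact Set.ncard_le_ncard hsub (Finset.finite_toSet _)
    _ = ((B ×ˢ B).filter (fun q : ℝ × ℝ => (q.1 + q.2) / 2 ∈ B)).card :=
        Set.ncard_coe_finset _
    _ ≤ (B.card ^ 2 + 1) / 2 := oneD_bound B
    _ = (A.ncard ^ 2 + 1) / 2 := by rw [hBcard]

/-- For every positive `k` and `n`, the maximal number of 3-term arithmetic
progressions in an `n`-element subset of `k`-dimensional Euclidean space is `⌈n²/2⌉`. -/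
theorem max_AP3_euclidean (k : ℕ) (hk : 0 < k) (n : ℕ) (hn : 0 < n) :
    IsGreatest {m : ℕ | ∃ A : Set (EuclideanSpace ℝ (Fin k)),
      A.Finite ∧ A.ncard = n ∧ (AT A).ncard = m} ((n ^ 2 + 1) / 2) := by
  constructor
  · obtain ⟨A, h1, h2, h3⟩ := lower_witness k n hk
    exact ⟨A, h1, h2, h3⟩
  · rintro m ⟨A, hfin, hcard, rfl⟩
    have := upper_bound A hfin
    rwa [hcard] at this
end

section
/- Let M be a metric space such that for any two points a, c ∈ M there is at most one point b ∈ M with d(a,b) = d(b,c) = (1/2)·d(a,c). Then for every positive integer n and every n-element subset A ⊆ M, |AT_M(A)| ≤ n² − 2n + 2. -/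
open Finset

lemma isAP3_symm {M : Type*} [MetricSpace M] {a b c : M} (h : IsAP3 a b c) :
    IsAP3 c b a := by
  obtain ⟨h1, h2⟩ := h
  refine ⟨?_, ?_⟩
  · rw [dist_comm c b, dist_comm b a]
    exact h1.symm
  · rw [dist_comm b a, dist_comm c a]
    exact h1.trans h2

lemma connected_card_le_edges {V : Type*} [Fintype V] (G : SimpleGraph V)
    [Fintype G.edgeSet] (h : G.Connected) : Fintype.card V ≤ G.edgeFinset.card + 1 := by
  classical
  have hne := h.nonempty
  inhabit V
  set r : V := default with hr
  have key : ∀ v : V, v ≠ r → ∃ w, G.Adj v w ∧ G.dist w r + 1 ≤ G.dist v r := by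
    intro v hv
    obtain ⟨p, hp⟩ := (h v r).exists_walk_length_eq_dist
    have hd : 0 < G.dist v r := h.pos_dist_of_ne hv
    have hnil : ¬ p.Nil := by
      intro hnil
      rw [SimpleGraph.Walk.nil_iff_length_eq] at hnil
      omega
    refine ⟨p.snd, p.adj_snd hnil, ?_⟩
    have h1 := SimpleGraph.dist_le p.tail
    have h2 := SimpleGraph.Walk.length_tail_add_one hnil
    omega
  choose nxt hadj hdist using key
  have hinj : (Finset.univ.erase r).card ≤ G.edgeFinset.card := by
    apply Finset.card_le_card_of_injOn
      (fun v => if hv : v ≠ r then s(v, nxt v hv) else s(v, v))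
    · intro v hv
      have hv' : v ≠ r := Finset.ne_of_mem_erase hv
      simp only [hv', dif_pos, Ne, not_false_iff]
      rw [Finset.mem_coe, SimpleGraph.mem_edgeFinset, SimpleGraph.mem_edgeSet]
      exact hadj v hv'
    · intro v hv w hw hvw
      have hv' : v ≠ r := Finset.ne_of_mem_erase (Finset.mem_coe.mp hv)
      have hw' : w ≠ r := Finset.ne_of_mem_erase (Finset.mem_coe.mp hw)
      simp only [] at hvw
      rw [dif_pos hv', dif_pos hw'] at hvw
      rw [Sym2.eq_iff] at hvw
      rcases hvw with ⟨h1, h2⟩ | ⟨h1, h2⟩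
      · exact h1
      · have d1 := hdist v hv'
        have d2 := hdist w hw'
        rw [h2] at d1
        rw [← h1] at d2
        omega
  have : (Finset.univ.erase r).card = Fintype.card V - 1 := by
    rw [Finset.card_erase_of_mem (Finset.mem_univ r), Finset.card_univ]
  have hpos : 0 < Fintype.card V := Fintype.card_pos
  omega

/-- If in `M` any two points `a, c` admit at most one midpoint `b` with
`d(a,b) = d(b,c) = (1/2)·d(a,c)`, then every `n`-element subset `A ⊆ M`
satisfies `|AT_M(A)| ≤ n² − 2n + 2`. -/
theorem AT_le_of_unique_midpoint {M : Type*} [MetricSpace M]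
    (hM : ∀ a c b₁ b₂ : M, IsAP3 a b₁ c → IsAP3 a b₂ c → b₁ = b₂)
    (n : ℕ) (hn : 0 < n) (A : Set M) (hA : A.Finite) (hcard : A.ncard = n) :
    (AT A).ncard ≤ n ^ 2 + 2 - 2 * n := by
  classical
  set F : Finset M := hA.toFinset with hF
  have hmemF : ∀ x : M, x ∈ F ↔ x ∈ A := fun x => hA.mem_toFinset
  have hFcard : F.card = n := by
    rw [← hcard, Set.ncard_eq_toFinset_card A hA]
  -- the finset of APs
  set S : Finset (M × M × M) :=
    (F ×ˢ F ×ˢ F).filter (fun p => IsAP3 p.1 p.2.1 p.2.2) with hS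
  have hAT : (AT A).ncard = S.card := by
    have : AT A = ↑S := by
      ext ⟨a, b, c⟩
      simp only [AT, Set.mem_setOf_eq, hS, Finset.coe_filter, Finset.mem_product,
        hmemF, Set.mem_setOf_eq]
      tauto
    rw [this, Set.ncard_coe_finset]
  rw [hAT]
  -- split into trivial and nontrivial APs
  set T : Finset (M × M × M) := S.filter (fun p => p.1 = p.2.2) with hT
  set N : Finset (M × M × M) := S.filter (fun p => ¬ p.1 = p.2.2) with hN
  have hTN : T.card + N.card = S.card := Finset.card_filter_add_card_filter_not _
  -- trivial APs are diagonal
  have hdiag : ∀ p ∈ T, p = (p.1, p.1, p.1) := by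
    rintro ⟨a, b, c⟩ hp
    rw [hT, Finset.mem_filter] at hp
    obtain ⟨hpS, hac⟩ := hp
    rw [hS, Finset.mem_filter] at hpS
    obtain ⟨-, h1, h2⟩ := hpS
    simp only at hac h1 h2
    subst hac
    have hb : b = a := by
      have h0 : dist b a = 0 := by
        rw [h2]
        simp
      rwa [dist_eq_zero] at h0
    simp [hb]
  have hTcard : T.card ≤ n := by
    rw [← hFcard]
    apply Finset.card_le_card_of_injOn (fun p => p.1)
    · intro p hp
      have hpS : p ∈ S := Finset.mem_filter.mp hp |>.1
      rw [hS, Finset.mem_filter] at hpS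
      exact (Finset.mem_product.mp hpS.1).1
    · intro p hp q hq hpq
      have hp' := hdiag p (Finset.mem_coe.mp hp)
      have hq' := hdiag q (Finset.mem_coe.mp hq)
      have hpq' : p.1 = q.1 := hpq
      rw [hp', hq', hpq']
  -- pairs
  set D : Finset (M × M) := (F ×ˢ F).filter (fun p => p.1 ≠ p.2) with hD
  set P : Finset (M × M) := D.filter (fun p => ∃ b ∈ A, IsAP3 p.1 b p.2) with hP
  set Q : Finset (M × M) := D.filter (fun p => ¬ ∃ b ∈ A, IsAP3 p.1 b p.2) with hQ
  have hPQ : P.card + Q.card = D.card := Finset.card_filter_add_card_filter_not _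
  have hDcard : D.card = n * n - n := by
    have : D = F.offDiag := by
      ext p
      rw [hD, Finset.mem_filter, Finset.mem_product, Finset.mem_offDiag]
      cases p
      tauto
    rw [this, Finset.offDiag_card, hFcard]
  -- nontrivial APs inject into P
  have hNP : N.card ≤ P.card := by
    apply Finset.card_le_card_of_injOn (fun p => (p.1, p.2.2))
    · rintro ⟨a, b, c⟩ hp
      rw [hN, Finset.mem_coe, Finset.mem_filter] at hp
      obtain ⟨hpS, hac⟩ := hp
      rw [hS, Finset.mem_filter] at hpS
      obtain ⟨hmem, hap⟩ := hpS
      rw [Finset.mem_product] at hmem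
      rw [Finset.mem_product] at hmem
      rw [hP, Finset.mem_coe, Finset.mem_filter, hD, Finset.mem_filter, Finset.mem_product]
      refine ⟨⟨⟨hmem.1, hmem.2.2⟩, hac⟩, b, ?_, hap⟩
      exact (hmemF b).mp (hmem.2.1)
    · rintro ⟨a, b, c⟩ hp ⟨a', b', c'⟩ hq hpq
      simp only [Prod.mk.injEq] at hpq
      obtain ⟨rfl, rfl⟩ := hpq
      have hp' := Finset.mem_coe.mp hp
      have hq' := Finset.mem_coe.mp hq
      rw [hN, Finset.mem_filter, hS, Finset.mem_filter] at hp' hq'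
      have : b = b' := hM a c b b' hp'.1.2 hq'.1.2
      rw [this]
  -- the graph of forbidden pairs
  haveI : Fintype ↥A := hA.fintype
  have hAcard : Fintype.card ↥A = n := by
    rw [← hcard, ← Nat.card_coe_set_eq, Nat.card_eq_fintype_card]
  have hAne : Nonempty ↥A := by
    have : A.Nonempty := Set.nonempty_of_ncard_ne_zero (by omega)
    exact this.to_subtype
  set G : SimpleGraph ↥A :=
    { Adj := fun x y => x ≠ y ∧ ∀ b ∈ A, ¬ IsAP3 (x : M) b (y : M),
      symm := ⟨by
        rintro x y ⟨h1, h2⟩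
        exact ⟨h1.symm, fun b hb hap => h2 b hb (isAP3_symm hap)⟩⟩,
      loopless := ⟨fun x h => h.1 rfl⟩ } with hG
  have hconn : G.Connected := by
    rw [SimpleGraph.connected_iff]
    refine ⟨?_, hAne⟩
    set μ : M → M → ℕ :=
      fun a c => ((F ×ˢ F).filter (fun p => dist p.1 p.2 < dist a c)).card with hμ
    have key : ∀ k : ℕ, ∀ x y : ↥A, μ (x : M) (y : M) ≤ k → G.Reachable x y := by
      intro k
      induction k with
      | zero =>
        intro x y hxy
        by_cases hxy' : x = y
        · exact hxy' ▸ SimpleGraph.Reachable.refl x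
        by_cases hadj : G.Adj x y
        · exact hadj.reachable
        · exfalso
          have hadj' : ¬ ((x ≠ y) ∧ ∀ b ∈ A, ¬ IsAP3 (x : M) b (y : M)) := hadj
          push_neg at hadj'
          obtain ⟨b, hbA, hb⟩ := hadj' hxy'
          have hd0 : (0 : ℝ) < dist (x : M) (y : M) :=
            dist_pos.mpr (fun h => hxy' (Subtype.ext h))
          have hxb : dist (x : M) b = dist (x : M) (y : M) / 2 := hb.1.trans hb.2
          have hpos : 0 < μ (x : M) (y : M) := by
            apply Finset.card_pos.mpr
            refine ⟨((x : M), b), ?_⟩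
            rw [Finset.mem_filter, Finset.mem_product]
            refine ⟨⟨(hmemF _).mpr x.2, (hmemF _).mpr hbA⟩, ?_⟩
            show dist (x : M) b < dist (x : M) (y : M)
            rw [hxb]
            linarith
          omega
      | succ k ih =>
        intro x y hxy
        by_cases hxy' : x = y
        · exact hxy' ▸ SimpleGraph.Reachable.refl x
        by_cases hadj : G.Adj x y
        · exact hadj.reachable
        · have hadj' : ¬ ((x ≠ y) ∧ ∀ b ∈ A, ¬ IsAP3 (x : M) b (y : M)) := hadj
          push_neg at hadj'
          obtain ⟨b, hbA, hb⟩ := hadj' hxy'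
          have hd0 : (0 : ℝ) < dist (x : M) (y : M) :=
            dist_pos.mpr (fun h => hxy' (Subtype.ext h))
          have hxb : dist (x : M) b = dist (x : M) (y : M) / 2 := hb.1.trans hb.2
          have hby : dist b (y : M) = dist (x : M) (y : M) / 2 := hb.2
          set b' : ↥A := ⟨b, hbA⟩ with hb'
          have hwit : ((x : M), b) ∈
              (F ×ˢ F).filter (fun p => dist p.1 p.2 < dist (x : M) (y : M)) := by
            rw [Finset.mem_filter, Finset.mem_product]
            refine ⟨⟨(hmemF _).mpr x.2, (hmemF _).mpr hbA⟩, ?_⟩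
            show dist (x : M) b < dist (x : M) (y : M)
            rw [hxb]
            linarith
          have h1 : μ (x : M) b < μ (x : M) (y : M) := by
            apply Finset.card_lt_card
            rw [Finset.ssubset_iff_of_subset]
            · refine ⟨((x : M), b), hwit, ?_⟩
              rw [Finset.mem_filter]
              rintro ⟨-, hlt⟩
              have hlt' : dist (x : M) b < dist (x : M) b := hlt
              exact lt_irrefl _ hlt'
            · apply Finset.monotone_filter_right
              intro p _ hp
              have hp' : dist p.1 p.2 < dist (x : M) b := hp
              show dist p.1 p.2 < dist (x : M) (y : M)
              rw [hxb] at hp'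
              linarith
          have h2 : μ b (y : M) < μ (x : M) (y : M) := by
            apply Finset.card_lt_card
            rw [Finset.ssubset_iff_of_subset]
            · refine ⟨((x : M), b), hwit, ?_⟩
              rw [Finset.mem_filter]
              rintro ⟨-, hlt⟩
              have hlt' : dist (x : M) b < dist b (y : M) := hlt
              rw [hxb, hby] at hlt'
              exact lt_irrefl _ hlt'
            · apply Finset.monotone_filter_right
              intro p _ hp
              have hp' : dist p.1 p.2 < dist b (y : M) := hp
              show dist p.1 p.2 < dist (x : M) (y : M)
              rw [hby] at hp'
              linarith
          have r1 : G.Reachable x b' := ih x b' (by show μ (x : M) b ≤ k; omega)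
          have r2 : G.Reachable b' y := ih b' y (by show μ b (y : M) ≤ k; omega)
          exact r1.trans r2
    intro x y
    exact key (μ (x : M) (y : M)) x y le_rfl
  -- lower bound on Q via the connected graph G
  have hQcard : 2 * (n - 1) ≤ Q.card := by
    have hedge := connected_card_le_edges G hconn
    have h2m : 2 * G.edgeFinset.card
        = (Finset.univ.filter fun p : ↥A × ↥A => G.Adj p.1 p.2).card :=
      SimpleGraph.two_mul_card_edgeFinset (G := G)
    have hinj2 : (Finset.univ.filter fun p : ↥A × ↥A => G.Adj p.1 p.2).card ≤ Q.card := by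
      apply Finset.card_le_card_of_injOn (fun p => ((p.1 : M), (p.2 : M)))
      · rintro ⟨u, v⟩ hp
        rw [Finset.mem_coe, Finset.mem_filter] at hp
        have hadj : (u ≠ v) ∧ ∀ b ∈ A, ¬ IsAP3 (u : M) b (v : M) := hp.2
        rw [hQ, Finset.mem_coe, Finset.mem_filter, hD, Finset.mem_filter, Finset.mem_product]
        refine ⟨⟨⟨(hmemF _).mpr u.2, (hmemF _).mpr v.2⟩, ?_⟩, ?_⟩
        · exact fun h => hadj.1 (Subtype.ext h)
        · rintro ⟨b, hbA, hap⟩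
          exact hadj.2 b hbA hap
      · rintro ⟨u, v⟩ hu ⟨u', v'⟩ hv h
        simp only [Prod.mk.injEq] at h
        have h1 : u = u' := Subtype.ext h.1
        have h2 : v = v' := Subtype.ext h.2
        rw [h1, h2]
    have hAedge : n ≤ G.edgeFinset.card + 1 := hAcard ▸ hedge
    omega
  -- final counting
  have hnn : n ≤ n * n := Nat.le_mul_of_pos_left n hn
  rw [pow_two]
  set k := n * n with hk
  clear_value k
  omega
end

section
/- Let M be a metric space and ℒ a family of subsets of M ('lines') such that: (i) each L ∈ ℒ is isometric to a subset of the real line, i.e., there exists f : L → ℝ with |f(x) − f(y)| = d(x,y) for all x,y ∈ L; (ii) for any two distinct points of M there is a unique L ∈ ℒ containing them both; (iii) for every nonconstant 3-term arithmetic progression (a,b,c) in M, the points a, b, c lie on a common line in ℒ. Then for every positive integer n and every n-element subset A ⊆ M, |AT_M(A)| ≤ ⌈n²/2⌉. -/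
set_option maxHeartbeats 1000000


lemma mid_eq {x y z : ℝ} (h1 : |x - y| = |x - z| / 2) (h2 : |y - z| = |x - z| / 2) :
    y = (x + z) / 2 := by
  rcases abs_cases (x - y) with ⟨e1, s1⟩ | ⟨e1, s1⟩ <;>
  rcases abs_cases (y - z) with ⟨e2, s2⟩ | ⟨e2, s2⟩ <;>
  rcases abs_cases (x - z) with ⟨e3, s3⟩ | ⟨e3, s3⟩ <;>
  linarith

open Finset in
/-- key counting lemma on the real line -/
lemma real_pairs_bound : ∀ (k : ℕ) (B : Finset ℝ), B.card = k →
    2 * ((B ×ˢ B).filter (fun p => p.1 ≠ p.2 ∧ (p.1 + p.2) / 2 ∈ B)).card ≤ (k - 1) ^ 2 := by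
  intro k
  induction k using Nat.strong_induction_on with
  | _ k ih =>
    intro B hB
    set P := (B ×ˢ B).filter (fun p => p.1 ≠ p.2 ∧ (p.1 + p.2) / 2 ∈ B) with hP
    by_cases hk2 : k ≤ 2
    · have : P = ∅ := by
        rw [Finset.eq_empty_iff_forall_notMem]
        rintro ⟨a, c⟩ hp
        simp only [hP, Finset.mem_filter, Finset.mem_product] at hp
        obtain ⟨⟨ha, hc⟩, hne, hb⟩ := hp
        have hsub : ({a, (a + c) / 2, c} : Finset ℝ) ⊆ B := by
          intro x hx
          simp only [Finset.mem_insert, Finset.mem_singleton] at hx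
          rcases hx with rfl | rfl | rfl <;> assumption
        have h3 : ({a, (a + c) / 2, c} : Finset ℝ).card = 3 := by
          rw [Finset.card_insert_of_notMem, Finset.card_insert_of_notMem]
          · rfl
          · simp only [Finset.mem_singleton]
            intro h; apply hne; linarith
          · simp only [Finset.mem_insert, Finset.mem_singleton]
            push_neg
            constructor
            · intro h; apply hne; linarith
            · intro h; apply hne; linarith
        have := Finset.card_le_card hsub
        omega
      simp [this]
    · push_neg at hk2
      have hkcard : 1 < B.card := by omega
      have hne : B.Nonempty := Finset.card_pos.mp (by omega)
      set m := B.min' hne with hm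
      set Mx := B.max' hne with hMx
      have hmM : m < Mx := Finset.min'_lt_max'_of_card B hkcard
      have hmB : m ∈ B := B.min'_mem hne
      have hMB : Mx ∈ B := B.max'_mem hne
      set B'' := (B.erase m).erase Mx with hB''
      have hMx' : Mx ∈ B.erase m := Finset.mem_erase.mpr ⟨ne_of_gt hmM, hMB⟩
      have hBcard'' : B''.card = k - 2 := by
        rw [hB'', Finset.card_erase_of_mem hMx', Finset.card_erase_of_mem hmB, hB]
        omega
      have hB''sub : B'' ⊆ B := (Finset.erase_subset _ _).trans (Finset.erase_subset _ _)
      -- bounds for elements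
      have hlow : ∀ x ∈ B, m ≤ x := fun x hx => B.min'_le x hx
      have hhigh : ∀ x ∈ B, x ≤ Mx := fun x hx => B.le_max' x hx
      have hmemB'' : ∀ x ∈ B, x ≠ m → x ≠ Mx → x ∈ B'' := by
        intro x hx h1 h2
        exact Finset.mem_erase.mpr ⟨h2, Finset.mem_erase.mpr ⟨h1, hx⟩⟩
      -- midpoint of a pair is in B''
      have hmidB'' : ∀ a ∈ B, ∀ c ∈ B, a ≠ c → (a + c) / 2 ∈ B → (a + c) / 2 ∈ B'' := by
        intro a ha c hc hac hb
        apply hmemB'' _ hb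
        · rcases lt_or_gt_of_ne hac with h | h
          · have := hlow a ha; intro he; rw [← he] at this; linarith
          · have := hlow c hc; intro he; rw [← he] at this; linarith
        · rcases lt_or_gt_of_ne hac with h | h
          · have := hhigh c hc; intro he; rw [← he] at this; linarith
          · have := hhigh a ha; intro he; rw [← he] at this; linarith
      set P'' := (B'' ×ˢ B'').filter (fun p => p.1 ≠ p.2 ∧ (p.1 + p.2) / 2 ∈ B'') with hP''
      set Touch := P.filter (fun p => p.1 = m ∨ p.1 = Mx ∨ p.2 = m ∨ p.2 = Mx) with hT
      have hsplit : P ⊆ P'' ∪ Touch := by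
        rintro ⟨a, c⟩ hp
        by_cases ht : a = m ∨ a = Mx ∨ c = m ∨ c = Mx
        · exact Finset.mem_union_right _ (Finset.mem_filter.mpr ⟨hp, ht⟩)
        · push_neg at ht
          apply Finset.mem_union_left
          simp only [hP, Finset.mem_filter, Finset.mem_product] at hp
          obtain ⟨⟨ha, hc⟩, hne2, hb⟩ := hp
          simp only [hP'', Finset.mem_filter, Finset.mem_product]
          exact ⟨⟨hmemB'' a ha ht.1 ht.2.1, hmemB'' c hc ht.2.2.1 ht.2.2.2⟩, hne2,
            hmidB'' a ha c hc hne2 hb⟩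
      -- helper for injectivity
      have helper : ∀ a ∈ B, ∀ c ∈ B, ∀ a' ∈ B, ∀ c' ∈ B, a < c → a' < c' →
          (a = m ∨ c = Mx) → (a' = m ∨ c' = Mx) → a + c = a' + c' → a = a' ∧ c = c' := by
        intro a ha c hc a' ha' c' hc' h1 h2 t1 t2 hsum
        rcases t1 with rfl | rfl <;> rcases t2 with rfl | rfl
        · constructor <;> linarith
        · -- a = m, c' = Mx
          have h3 : m ≤ a' := hlow a' ha'
          have h4 : c ≤ Mx := hhigh c hc
          constructor <;> linarith
        · have h3 : m ≤ a := hlow a ha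
          have h4 : c' ≤ Mx := hhigh c' hc'
          constructor <;> linarith
        · constructor <;> linarith
      -- touching reduces: for (a,c) ∈ Touch with a < c, a = m ∨ c = Mx
      have hreduce : ∀ a ∈ B, ∀ c ∈ B, a < c → (a = m ∨ a = Mx ∨ c = m ∨ c = Mx) →
          (a = m ∨ c = Mx) := by
        intro a ha c hc hlt ht
        rcases ht with h | h | h | h
        · exact Or.inl h
        · exfalso; have := hhigh c hc; rw [h] at hlt; linarith
        · exfalso; have := hlow a ha; rw [h] at hlt; linarith
        · exact Or.inr h
      have hTouch : Touch.card ≤ (k - 2) * 2 := by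
        have hinj : ∀ p ∈ Touch, ∀ q ∈ Touch,
            (fun p : ℝ × ℝ => ((p.1 + p.2) / 2, decide (p.1 < p.2))) p =
            (fun p : ℝ × ℝ => ((p.1 + p.2) / 2, decide (p.1 < p.2))) q → p = q := by
          rintro ⟨a, c⟩ hp ⟨a', c'⟩ hq heq
          simp only [hT, hP, Finset.mem_filter, Finset.mem_product] at hp hq
          obtain ⟨⟨⟨ha, hc⟩, hne1, _⟩, ht1⟩ := hp
          obtain ⟨⟨⟨ha', hc'⟩, hne2, _⟩, ht2⟩ := hq
          simp only [Prod.mk.injEq, decide_eq_decide] at heq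
          obtain ⟨hmideq, hordeq⟩ := heq
          have hsum : a + c = a' + c' := by linarith
          rcases lt_or_gt_of_ne hne1 with hlt | hgt
          · have hlt' : a' < c' := hordeq.mp hlt
            have := helper a ha c hc a' ha' c' hc' hlt hlt'
              (hreduce a ha c hc hlt ht1) (hreduce a' ha' c' hc' hlt' ht2) hsum
            simp [Prod.ext_iff, this.1, this.2]
          · have hgt' : c' < a' := by
              rcases lt_trichotomy a' c' with h | h | h
              · exact absurd (hordeq.mpr h) (not_lt_of_gt hgt)
              · exact absurd h hne2
              · exact h
            have ht1' : c = m ∨ a = Mx := by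
              rcases hreduce c hc a ha hgt (by tauto) with h | h
              · exact Or.inl h
              · exact Or.inr h
            have ht2' : c' = m ∨ a' = Mx := by
              rcases hreduce c' hc' a' ha' hgt' (by tauto) with h | h
              · exact Or.inl h
              · exact Or.inr h
            have := helper c hc a ha c' hc' a' ha' hgt hgt' ht1' ht2' (by linarith)
            simp [Prod.ext_iff, this.1, this.2]
        have hmaps : ∀ p ∈ Touch,
            (fun p : ℝ × ℝ => ((p.1 + p.2) / 2, decide (p.1 < p.2))) p ∈ B'' ×ˢ (Finset.univ : Finset Bool) := by
          rintro ⟨a, c⟩ hp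
          simp only [hT, hP, Finset.mem_filter, Finset.mem_product] at hp
          obtain ⟨⟨⟨ha, hc⟩, hne1, hb⟩, _⟩ := hp
          simp only [Finset.mem_product, Finset.mem_univ, and_true]
          exact hmidB'' a ha c hc hne1 hb
        have := Finset.card_le_card_of_injOn _ hmaps hinj
        rwa [Finset.card_product, hBcard'', Finset.card_univ, Fintype.card_bool] at this
      have hP''bound : 2 * P''.card ≤ (k - 2 - 1) ^ 2 := ih (k - 2) (by omega) B'' hBcard''
      have hcards : P.card ≤ P''.card + Touch.card :=
        (Finset.card_le_card hsplit).trans (Finset.card_union_le _ _)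
      -- arithmetic
      obtain ⟨j, rfl⟩ : ∃ j, k = j + 3 := ⟨k - 3, by omega⟩
      have e1 : j + 3 - 2 - 1 = j := by omega
      have e2 : j + 3 - 2 = j + 1 := by omega
      have e3 : j + 3 - 1 = j + 2 := by omega
      rw [e1] at hP''bound
      rw [e2] at hTouch
      rw [e3]
      nlinarith [hP''bound, hTouch, hcards]

/-- If `M` admits a family `ℒ` of 'lines' such that each line embeds isometrically into
the real line, any two distinct points lie on a unique line, and the three points of any
nonconstant 3-term arithmetic progression lie on a common line, then
`|AT_M(A)| ≤ ⌈n²/2⌉` for every `n`-element subset `A ⊆ M`. -/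
theorem AT_le_of_lines {M : Type*} [MetricSpace M] (ℒ : Set (Set M))
    (h₁ : ∀ L ∈ ℒ, ∃ f : M → ℝ, ∀ x ∈ L, ∀ y ∈ L, |f x - f y| = dist x y)
    (h₂ : ∀ x y : M, x ≠ y → ∃! L : Set M, L ∈ ℒ ∧ x ∈ L ∧ y ∈ L)
    (h₃ : ∀ a b c : M, IsAP3 a b c → 0 < dist a c →
      ∃ L ∈ ℒ, a ∈ L ∧ b ∈ L ∧ c ∈ L)
    (n : ℕ) (hn : 0 < n) (A : Set M) (hA : A.Finite) (hcard : A.ncard = n) :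
    (AT A).ncard ≤ (n ^ 2 + 1) / 2 := by
  classical
  -- uniqueness of the line through two distinct points
  have U : ∀ L ∈ ℒ, ∀ L' ∈ ℒ, ∀ x y : M, x ≠ y → x ∈ L → y ∈ L → x ∈ L' → y ∈ L' →
      L = L' := by
    intro L hL L' hL' x y hxy hxL hyL hxL' hyL'
    obtain ⟨L₀, _, huniq⟩ := h₂ x y hxy
    rw [huniq L ⟨hL, hxL, hyL⟩, huniq L' ⟨hL', hxL', hyL'⟩]
  -- uniqueness of the midpoint
  have hmid : ∀ a b b' c : M, a ≠ c → IsAP3 a b c → IsAP3 a b' c → b = b' := by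
    intro a b b' c hac hap hap'
    have hd : 0 < dist a c := dist_pos.mpr hac
    obtain ⟨L, hL, haL, hbL, hcL⟩ := h₃ a b c hap hd
    obtain ⟨L', hL', haL', hbL', hcL'⟩ := h₃ a b' c hap' hd
    have hLL : L = L' := U L hL L' hL' a c hac haL hcL haL' hcL'
    subst hLL
    obtain ⟨f, hf⟩ := h₁ L hL
    have e1 : |f a - f b| = |f a - f c| / 2 := by
      rw [hf a haL b hbL, hf a haL c hcL]; exact hap.1.trans hap.2
    have e2 : |f b - f c| = |f a - f c| / 2 := by
      rw [hf b hbL c hcL, hf a haL c hcL]; exact hap.2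
    have e1' : |f a - f b'| = |f a - f c| / 2 := by
      rw [hf a haL b' hbL', hf a haL c hcL]; exact hap'.1.trans hap'.2
    have e2' : |f b' - f c| = |f a - f c| / 2 := by
      rw [hf b' hbL' c hcL, hf a haL c hcL]; exact hap'.2
    have hbb : f b = f b' := by rw [mid_eq e1 e2, mid_eq e1' e2']
    have : dist b b' = 0 := by rw [← hf b hbL b' hbL', hbb, sub_self, abs_zero]
    exact dist_eq_zero.mp this
  set A' := hA.toFinset with hA'def
  have hAmem : ∀ x, x ∈ A' ↔ x ∈ A := fun x => hA.mem_toFinset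
  have hcard' : A'.card = n := by
    rw [← hcard, Set.ncard_eq_toFinset_card A hA]
  set S := (A' ×ˢ A').filter
      (fun p => p.1 ≠ p.2 ∧ ∃ b ∈ A', IsAP3 p.1 b p.2) with hSdef
  have hSmem : ∀ p ∈ S, p.1 ∈ A' ∧ p.2 ∈ A' ∧ p.1 ≠ p.2 ∧ ∃ b ∈ A', IsAP3 p.1 b p.2 := by
    intro p hp
    simp only [hSdef, Finset.mem_filter, Finset.mem_product] at hp
    exact ⟨hp.1.1, hp.1.2, hp.2.1, hp.2.2⟩
  -- Step 1 : (AT A).ncard ≤ n + S.card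
  have hstep1 : (AT A).ncard ≤ n + S.card := by
    set D : Set (M × M × M) := (fun a => (a, a, a)) '' A with hDdef
    set Nc : Set (M × M × M) := {p ∈ AT A | p.1 ≠ p.2.2} with hNcdef
    have hATsub : AT A ⊆ D ∪ Nc := by
      rintro ⟨a, b, c⟩ hp
      obtain ⟨ha, hb, hc, hap⟩ := hp
      by_cases hac : a = c
      · left
        subst hac
        have h0 : dist a a = 0 := dist_self a
        have hbc : dist b a = 0 := by
          have := hap.2; rw [h0] at this; simpa using this
        have hba : b = a := dist_eq_zero.mp hbc
        exact ⟨a, ha, by rw [hba]⟩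
      · exact Or.inr ⟨⟨ha, hb, hc, hap⟩, hac⟩
    have hDfin : D.Finite := hA.image _
    have hNcfin : Nc.Finite := by
      apply Set.Finite.subset (hA.prod (hA.prod hA))
      rintro ⟨a, b, c⟩ ⟨⟨ha, hb, hc, _⟩, _⟩
      exact ⟨ha, hb, hc⟩
    have hD : D.ncard ≤ n := by
      rw [← hcard]; exact Set.ncard_image_le hA
    have hNc : Nc.ncard ≤ S.card := by
      rw [← Set.ncard_coe_finset S]
      apply Set.ncard_le_ncard_of_injOn (fun p => (p.1, p.2.2))
      · rintro ⟨a, b, c⟩ ⟨⟨ha, hb, hc, hap⟩, hac⟩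
        simp only [Finset.coe_filter, Finset.mem_product, Set.mem_setOf_eq, hSdef,
          Finset.mem_coe, Finset.mem_filter]
        exact ⟨⟨(hAmem a).mpr ha, (hAmem c).mpr hc⟩, hac, b, (hAmem b).mpr hb, hap⟩
      · rintro ⟨a, b, c⟩ ⟨⟨_, _, _, hap⟩, hac⟩ ⟨a', b', c'⟩ ⟨⟨_, _, _, hap'⟩, _⟩ heq
        simp only [Prod.mk.injEq] at heq
        obtain ⟨h1, h2⟩ := heq
        subst h1; subst h2
        have : b = b' := hmid a b b' c hac hap hap'
        rw [this]
    calc (AT A).ncard ≤ (D ∪ Nc).ncard :=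
          Set.ncard_le_ncard hATsub (hDfin.union hNcfin)
      _ ≤ D.ncard + Nc.ncard := Set.ncard_union_le D Nc
      _ ≤ n + S.card := Nat.add_le_add hD hNc
  -- choose lines
  have hl : ∀ x y : M, ∃ L : Set M, x ≠ y → L ∈ ℒ ∧ x ∈ L ∧ y ∈ L := by
    intro x y
    by_cases h : x = y
    · exact ⟨∅, fun h' => absurd h h'⟩
    · obtain ⟨L, hL, _⟩ := h₂ x y h
      exact ⟨L, fun _ => hL⟩
  choose lineOf hlineOf using hl
  set Lines : Finset (Set M) := S.image (fun p => lineOf p.1 p.2) with hLinesdef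
  set SL : Set M → Finset (M × M) :=
    fun L => S.filter (fun p => p.1 ∈ L ∧ p.2 ∈ L) with hSLdef
  set AL : Set M → Finset M := fun L => A'.filter (· ∈ L) with hALdef
  have hALsub : ∀ L, ∀ x ∈ AL L, x ∈ A' ∧ x ∈ L := by
    intro L x hx
    simpa [hALdef] using Finset.mem_filter.mp hx
  have hLines : ∀ L ∈ Lines, L ∈ ℒ ∧ ∃ x y : M, x ∈ A' ∧ y ∈ A' ∧ x ≠ y ∧ x ∈ L ∧ y ∈ L := by
    intro L hLm
    obtain ⟨p, hp, rfl⟩ := Finset.mem_image.mp hLm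
    obtain ⟨h1, h2, h3, _⟩ := hSmem p hp
    obtain ⟨hLℒ, hm1, hm2⟩ := hlineOf p.1 p.2 h3
    exact ⟨hLℒ, p.1, p.2, h1, h2, h3, hm1, hm2⟩
  -- partition of S along lines
  have hpart : S.card ≤ ∑ L ∈ Lines, (SL L).card := by
    have hsub : S ⊆ Lines.biUnion SL := by
      intro p hp
      obtain ⟨_, _, h3, _⟩ := hSmem p hp
      obtain ⟨_, hm1, hm2⟩ := hlineOf p.1 p.2 h3
      refine Finset.mem_biUnion.mpr ⟨lineOf p.1 p.2, Finset.mem_image_of_mem _ hp, ?_⟩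
      simp only [hSLdef, Finset.mem_filter]
      exact ⟨hp, hm1, hm2⟩
    have hdisj : ∀ L ∈ Lines, ∀ L' ∈ Lines, L ≠ L' → Disjoint (SL L) (SL L') := by
      intro L hLm L' hLm' hne
      rw [Finset.disjoint_left]
      intro p hp hp'
      simp only [hSLdef, Finset.mem_filter] at hp hp'
      obtain ⟨_, _, h3, _⟩ := hSmem p hp.1
      exact hne (U L (hLines L hLm).1 L' (hLines L' hLm').1 p.1 p.2 h3
        hp.2.1 hp.2.2 hp'.2.1 hp'.2.2)
    calc S.card ≤ (Lines.biUnion SL).card := Finset.card_le_card hsub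
      _ = ∑ L ∈ Lines, (SL L).card := Finset.card_biUnion hdisj
  -- per-line bound
  have hperline : ∀ L ∈ Lines, 2 * (SL L).card ≤ ((AL L).card - 1) ^ 2 := by
    intro L hLm
    have hLℒ := (hLines L hLm).1
    obtain ⟨f, hf⟩ := h₁ L hLℒ
    set B := (AL L).image f with hBdef
    have hfinj : Set.InjOn f (AL L : Set M) := by
      intro x hx y hy hxy
      have hxL := (hALsub L x hx).2
      have hyL := (hALsub L y hy).2
      have : dist x y = 0 := by rw [← hf x hxL y hyL, hxy, sub_self, abs_zero]
      exact dist_eq_zero.mp this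
    have hBcard : B.card = (AL L).card := Finset.card_image_of_injOn hfinj
    have hinj2 : (SL L).card ≤
        ((B ×ˢ B).filter (fun q => q.1 ≠ q.2 ∧ (q.1 + q.2) / 2 ∈ B)).card := by
      apply Finset.card_le_card_of_injOn (fun p => (f p.1, f p.2))
      · intro p hp
        simp only [Finset.mem_coe, hSLdef, Finset.mem_filter] at hp
        obtain ⟨hpS, hp1L, hp2L⟩ := hp
        obtain ⟨h1, h2, h3, b, hbA, hap⟩ := hSmem p hpS
        have hp1AL : p.1 ∈ AL L := by simp [hALdef, Finset.mem_filter, h1, hp1L]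
        have hp2AL : p.2 ∈ AL L := by simp [hALdef, Finset.mem_filter, h2, hp2L]
        -- b lies on L
        have hd : 0 < dist p.1 p.2 := dist_pos.mpr h3
        obtain ⟨L₂, hL₂, ha₂, hb₂, hc₂⟩ := h₃ p.1 b p.2 hap hd
        have : L₂ = L := U L₂ hL₂ L hLℒ p.1 p.2 h3 ha₂ hc₂ hp1L hp2L
        subst this
        have hbAL : b ∈ AL L₂ := by simp [hALdef, Finset.mem_filter, hbA, hb₂]
        have hfne : f p.1 ≠ f p.2 := fun he => h3 (hfinj hp1AL hp2AL he)
        have hmidval : (f p.1 + f p.2) / 2 = f b := by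
          have e1 : |f p.1 - f b| = |f p.1 - f p.2| / 2 := by
            rw [hf p.1 hp1L b hb₂, hf p.1 hp1L p.2 hp2L]; exact hap.1.trans hap.2
          have e2 : |f b - f p.2| = |f p.1 - f p.2| / 2 := by
            rw [hf b hb₂ p.2 hp2L, hf p.1 hp1L p.2 hp2L]; exact hap.2
          exact (mid_eq e1 e2).symm
        simp only [Finset.mem_coe, Finset.mem_filter, Finset.mem_product]
        refine ⟨⟨Finset.mem_image_of_mem f hp1AL, Finset.mem_image_of_mem f hp2AL⟩,
          hfne, ?_⟩
        rw [hmidval]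
        exact Finset.mem_image_of_mem f hbAL
      · intro p hp q hq heq
        simp only [Finset.mem_coe, hSLdef, Finset.mem_filter] at hp hq
        obtain ⟨hpS, hp1L, hp2L⟩ := hp
        obtain ⟨hqS, hq1L, hq2L⟩ := hq
        obtain ⟨hp1A, hp2A, _, _⟩ := hSmem p hpS
        obtain ⟨hq1A, hq2A, _, _⟩ := hSmem q hqS
        simp only [Prod.mk.injEq] at heq
        have e1 : p.1 = q.1 := hfinj (by simp [hALdef, Finset.mem_filter, hp1A, hp1L])
          (by simp [hALdef, Finset.mem_filter, hq1A, hq1L]) heq.1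
        have e2 : p.2 = q.2 := hfinj (by simp [hALdef, Finset.mem_filter, hp2A, hp2L])
          (by simp [hALdef, Finset.mem_filter, hq2A, hq2L]) heq.2
        exact Prod.ext e1 e2
    have := real_pairs_bound B.card B rfl
    rw [hBcard] at this
    omega
  -- counting pairs over lines
  have hpairs : ∑ L ∈ Lines, ((AL L).card * (AL L).card - (AL L).card) ≤ n * n - n := by
    have hdisj : ∀ L ∈ Lines, ∀ L' ∈ Lines, L ≠ L' →
        Disjoint ((AL L).offDiag) ((AL L').offDiag) := by
      intro L hLm L' hLm' hne
      rw [Finset.disjoint_left]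
      rintro ⟨x, y⟩ hx hy
      rw [Finset.mem_offDiag] at hx hy
      exact hne (U L (hLines L hLm).1 L' (hLines L' hLm').1 x y hx.2.2
        (hALsub L x hx.1).2 (hALsub L y hx.2.1).2 (hALsub L' x hy.1).2
        (hALsub L' y hy.2.1).2)
    calc ∑ L ∈ Lines, ((AL L).card * (AL L).card - (AL L).card)
        = ∑ L ∈ Lines, ((AL L).offDiag).card := by
          refine Finset.sum_congr rfl fun L _ => ?_
          rw [Finset.offDiag_card]
      _ = (Lines.biUnion (fun L => (AL L).offDiag)).card :=
          (Finset.card_biUnion hdisj).symm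
      _ ≤ (A'.offDiag).card := by
          apply Finset.card_le_card
          intro p hp
          obtain ⟨L, hLm, hpL⟩ := Finset.mem_biUnion.mp hp
          rw [Finset.mem_offDiag] at hpL ⊢
          exact ⟨(hALsub L p.1 hpL.1).1, (hALsub L p.2 hpL.2.1).1, hpL.2.2⟩
      _ = n * n - n := by rw [Finset.offDiag_card, hcard']
  -- main sum bound
  have hmain : 2 * S.card ≤ (n - 1) ^ 2 := by
    have hTsum : 2 * S.card ≤ ∑ L ∈ Lines, ((AL L).card - 1) ^ 2 := by
      calc 2 * S.card ≤ 2 * ∑ L ∈ Lines, (SL L).card := by omega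
        _ = ∑ L ∈ Lines, 2 * (SL L).card := Finset.mul_sum Lines _ 2
        _ ≤ ∑ L ∈ Lines, ((AL L).card - 1) ^ 2 := Finset.sum_le_sum hperline
    by_cases hall : ∃ L0 ∈ Lines, ∀ x ∈ A', x ∈ L0
    · obtain ⟨L0, hL0, hsub0⟩ := hall
      have hsingle : Lines ⊆ {L0} := by
        intro L hLm
        obtain ⟨hLℒ, x, y, hx, hy, hxy, hxL, hyL⟩ := hLines L hLm
        have : L = L0 := U L hLℒ L0 (hLines L0 hL0).1 x y hxy hxL hyL
          (hsub0 x hx) (hsub0 y hy)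
        simp [this]
      have hsum_le : ∑ L ∈ Lines, ((AL L).card - 1) ^ 2 ≤ ((AL L0).card - 1) ^ 2 := by
        calc ∑ L ∈ Lines, ((AL L).card - 1) ^ 2
            ≤ ∑ L ∈ {L0}, ((AL L).card - 1) ^ 2 :=
              Finset.sum_le_sum_of_subset hsingle
          _ = ((AL L0).card - 1) ^ 2 := Finset.sum_singleton _ _
      have hk0 : (AL L0).card ≤ n := by
        rw [← hcard']
        exact Finset.card_le_card (Finset.filter_subset _ _)
      have : ((AL L0).card - 1) ^ 2 ≤ (n - 1) ^ 2 :=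
        Nat.pow_le_pow_left (by omega) 2
      omega
    · push_neg at hall
      rcases Nat.lt_or_ge n 2 with hn1 | hn2
      · -- n = 1 : S is empty
        have hn1' : n = 1 := by omega
        have : S = ∅ := by
          rw [Finset.eq_empty_iff_forall_notMem]
          intro p hp
          obtain ⟨h1, h2, h3, _⟩ := hSmem p hp
          have : A'.card ≤ 1 := by omega
          exact h3 (Finset.card_le_one.mp this p.1 h1 p.2 h2)
        rw [this]
        simp
      · -- all lines miss a point
        have hkle : ∀ L ∈ Lines, (AL L).card ≤ n - 1 := by
          intro L hLm
          obtain ⟨x, hx, hxL⟩ := hall L hLm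
          have hsubE : AL L ⊆ A'.erase x := by
            intro y hy
            refine Finset.mem_erase.mpr ⟨?_, (hALsub L y hy).1⟩
            intro he; subst he; exact hxL (hALsub L y hy).2
          calc (AL L).card ≤ (A'.erase x).card := Finset.card_le_card hsubE
            _ = n - 1 := by rw [Finset.card_erase_of_mem hx, hcard']
        obtain ⟨m, rfl⟩ : ∃ m, n = m + 2 := ⟨n - 2, by omega⟩
        have hterm : ∀ L ∈ Lines,
            (m + 1) * (((AL L).card - 1) ^ 2) ≤
            m * ((AL L).card * (AL L).card - (AL L).card) := by
          intro L hLm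
          have hk := hkle L hLm
          rcases Nat.lt_or_ge (AL L).card 2 with h | h
          · have h0 : (AL L).card - 1 = 0 := by omega
            rw [h0]
            simp
          · obtain ⟨a, ha⟩ : ∃ a, (AL L).card = a + 2 := ⟨(AL L).card - 2, by omega⟩
            rw [ha]
            have haux : (a + 2) * (a + 2) - (a + 2) = (a + 2) * (a + 1) := by
              rw [Nat.sub_eq_iff_eq_add (by nlinarith)]; ring
            rw [haux]
            have hb : a + 2 ≤ m + 1 := by omega
            have h21 : a + 2 - 1 = a + 1 := by omega
            rw [h21]
            nlinarith
        have hstep : (m + 1) * (∑ L ∈ Lines, ((AL L).card - 1) ^ 2) ≤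
            m * ((m + 2) * (m + 2) - (m + 2)) := by
          calc (m + 1) * (∑ L ∈ Lines, ((AL L).card - 1) ^ 2)
              = ∑ L ∈ Lines, (m + 1) * (((AL L).card - 1) ^ 2) :=
                Finset.mul_sum Lines _ _
            _ ≤ ∑ L ∈ Lines, m * ((AL L).card * (AL L).card - (AL L).card) :=
                Finset.sum_le_sum hterm
            _ = m * ∑ L ∈ Lines, ((AL L).card * (AL L).card - (AL L).card) :=
                (Finset.mul_sum Lines _ _).symm
            _ ≤ m * ((m + 2) * (m + 2) - (m + 2)) :=
                Nat.mul_le_mul_left m hpairs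
        have haux2 : (m + 2) * (m + 2) - (m + 2) = (m + 2) * (m + 1) := by
          rw [Nat.sub_eq_iff_eq_add (by nlinarith)]; ring
        rw [haux2] at hstep
        have hre : m * ((m + 2) * (m + 1)) = (m + 1) * (m * (m + 2)) := by ring
        rw [hre] at hstep
        have hT : ∑ L ∈ Lines, ((AL L).card - 1) ^ 2 ≤ m * (m + 2) :=
          Nat.le_of_mul_le_mul_left hstep (by omega)
        have : m * (m + 2) ≤ (m + 2 - 1) ^ 2 := by
          have h21 : m + 2 - 1 = m + 1 := by omega
          rw [h21]
          nlinarith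
        omega
  -- conclude
  rw [Nat.le_div_iff_mul_le (by norm_num : (0:ℕ) < 2)]
  obtain ⟨m, rfl⟩ : ∃ m, n = m + 1 := ⟨n - 1, by omega⟩
  have h1 : (m + 1 - 1) ^ 2 = m ^ 2 := by simp
  rw [h1] at hmain
  have h2 : (AT A).ncard * 2 ≤ (m + 1 + S.card) * 2 := by omega
  have h3 : (m + 1 + S.card) * 2 ≤ (m + 1) ^ 2 + 1 := by nlinarith
  omega
end

section
/- For every positive integer n and every n-element subset A of S¹ that is evenly spread around the circle, |AT_{S¹}(A)| = 2n·⌊n/4⌋ + n. -/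
open Real

/-- A set of `n` points of the circle `S¹ = ℝ/2πℤ` is evenly spread around the circle
if it equals `{a + k·(2π/n) : k = 0, 1, …, n−1}` for some point `a`. -/
def EvenlySpread (n : ℕ) (A : Set (AddCircle (2 * π))) : Prop :=
  ∃ a : AddCircle (2 * π),
    A = {x | ∃ k : ℕ, k < n ∧ x = a + ((k * (2 * π) / n : ℝ) : AddCircle (2 * π))}

namespace ATAux

open Finset

/-- circular step distance -/
def md (n : ℕ) (u : ZMod n) : ℕ := min u.val (n - u.val)

variable {n : ℕ} [NeZero n]

lemma md_eq_zero_iff {u : ZMod n} : md n u = 0 ↔ u = 0 := by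
  have h := ZMod.val_lt u
  have hn := NeZero.pos n
  rw [md]
  constructor
  · intro h0
    have : u.val = 0 := by omega
    exact (ZMod.val_eq_zero u).1 this
  · rintro rfl
    simp [ZMod.val_zero]

lemma eq_neg_of_val_add {u w : ZMod n} (h : u.val + w.val = n) : w = -u := by
  have : ((u.val + w.val : ℕ) : ZMod n) = 0 := by rw [h]; exact ZMod.natCast_self n
  push_cast at this
  rw [ZMod.natCast_val, ZMod.natCast_val, ZMod.cast_id, ZMod.cast_id] at this
  linear_combination this

lemma eq_or_eq_neg_of_md_eq {u w : ZMod n} (h : md n u = md n w) : w = u ∨ w = -u := by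
  have hu := ZMod.val_lt u
  have hw := ZMod.val_lt w
  rw [md, md] at h
  rcases (by omega : w.val = u.val ∨ u.val + w.val = n) with h1 | h1
  · left; exact ZMod.val_injective n h1
  · right; exact eq_neg_of_val_add h1

lemma md_add_self_iff {u : ZMod n} : md n (u + u) = 2 * md n u ↔ 4 * md n u ≤ n := by
  have hu := ZMod.val_lt u
  have hn := NeZero.pos n
  rw [md, md, ZMod.val_add]
  rcases Nat.lt_or_ge (u.val + u.val) n with h | h
  · rw [Nat.mod_eq_of_lt h]; omega
  · have hm : (u.val + u.val) % n = u.val + u.val - n := by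
      rw [Nat.mod_eq_sub_mod h, Nat.mod_eq_of_lt (by omega)]
    rw [hm]; omega

lemma nat_count (hn : 0 < n) :
    ((range n).filter fun v => 4 * min v (n - v) ≤ n).card = 2 * (n / 4) + 1 := by
  have he : ((range n).filter fun v => 4 * min v (n - v) ≤ n)
      = range (n / 4 + 1) ∪ Ico (n - n / 4) n := by
    ext v
    simp only [mem_filter, mem_range, mem_union, mem_Ico]
    omega
  have hd : Disjoint (range (n / 4 + 1)) (Ico (n - n / 4) n) := by
    rw [Finset.disjoint_left]
    intro v h1 h2
    simp only [mem_range] at h1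
    simp only [mem_Ico] at h2
    omega
  rw [he, card_union_of_disjoint hd, card_range, Nat.card_Ico]
  omega

lemma card_R :
    (univ.filter fun u : ZMod n => 4 * md n u ≤ n).card = 2 * (n / 4) + 1 := by
  have hn := NeZero.pos n
  rw [Finset.card_nbij' (i := fun u : ZMod n => u.val)
    (j := fun v : ℕ => (v : ZMod n))
    (t := (range n).filter fun v => 4 * min v (n - v) ≤ n)]
  · exact nat_count hn
  · intro u hu
    simp only [mem_coe, mem_filter, mem_range] at hu ⊢
    exact ⟨ZMod.val_lt u, hu.2⟩
  · intro v hv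
    simp only [mem_coe, mem_filter, mem_range] at hv ⊢
    rw [md, ZMod.val_cast_of_lt hv.1]
    exact ⟨Finset.mem_univ _, hv.2⟩
  · intro u _
    simp [ZMod.natCast_val, ZMod.cast_id]
  · intro v hv
    simp only [mem_coe, mem_filter, mem_range] at hv
    exact ZMod.val_cast_of_lt hv.1

lemma card_P :
    (univ.filter fun q : ZMod n × ZMod n =>
      md n q.1 = md n q.2 ∧ md n (q.1 + q.2) = 2 * md n q.2).card = 2 * (n / 4) + 1 := by
  rw [Finset.card_nbij' (i := fun q : ZMod n × ZMod n => q.1)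
    (j := fun u : ZMod n => (u, u))
    (t := univ.filter fun u : ZMod n => 4 * md n u ≤ n)]
  · exact card_R
  · intro q hq
    obtain ⟨-, h1, h2⟩ := Finset.mem_filter.mp hq
    refine Finset.mem_filter.mpr ⟨Finset.mem_univ _, ?_⟩
    rcases eq_or_eq_neg_of_md_eq h1 with he | he
    · rw [he] at h2
      exact md_add_self_iff.1 h2
    · rw [he, add_neg_cancel] at h2
      have h0 : md n (0 : ZMod n) = 0 := by simp [md, ZMod.val_zero]
      rw [h0] at h2
      have h4 : md n (-q.1) = 0 := by omega
      have h3 : (-q.1 : ZMod n) = 0 := md_eq_zero_iff.1 h4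
      have hq1 : q.1 = 0 := by linear_combination -h3
      dsimp only; rw [hq1, h0]
      omega
  · intro u hu
    obtain ⟨-, hu⟩ := Finset.mem_filter.mp hu
    exact Finset.mem_filter.mpr ⟨Finset.mem_univ _, rfl, md_add_self_iff.2 hu⟩
  · intro q hq
    obtain ⟨-, h1, h2⟩ := Finset.mem_filter.mp hq
    rcases eq_or_eq_neg_of_md_eq h1 with he | he
    · exact Prod.ext rfl he.symm
    · rw [he, add_neg_cancel] at h2
      have h0 : md n (0 : ZMod n) = 0 := by simp [md, ZMod.val_zero]
      rw [h0] at h2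
      have h4 : md n (-q.1) = 0 := by omega
      have h3 : (-q.1 : ZMod n) = 0 := md_eq_zero_iff.1 h4
      have hq1 : q.1 = 0 := by linear_combination -h3
      have hq2 : q.2 = 0 := by rw [he, hq1, neg_zero]
      exact Prod.ext rfl (by dsimp only; rw [hq1, hq2])
  · intro u _
    rfl

lemma card_T :
    (univ.filter fun p : ZMod n × ZMod n × ZMod n =>
      md n (p.1 - p.2.1) = md n (p.2.1 - p.2.2) ∧
      md n (p.1 - p.2.2) = 2 * md n (p.2.1 - p.2.2)).card = 2 * n * (n / 4) + n := by
  rw [Finset.card_nbij'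
    (i := fun p : ZMod n × ZMod n × ZMod n => (p.2.1, (p.1 - p.2.1, p.2.1 - p.2.2)))
    (j := fun q : ZMod n × ZMod n × ZMod n => (q.2.1 + q.1, q.1, q.1 - q.2.2))
    (t := univ ×ˢ (univ.filter fun q : ZMod n × ZMod n =>
      md n q.1 = md n q.2 ∧ md n (q.1 + q.2) = 2 * md n q.2))]
  · rw [Finset.card_product, card_univ, ZMod.card, card_P]
    ring
  · rintro ⟨x, y, z⟩ hp
    obtain ⟨-, h1, h2⟩ := Finset.mem_filter.mp hp
    refine Finset.mem_product.mpr ⟨Finset.mem_univ _, Finset.mem_filter.mpr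
      ⟨Finset.mem_univ _, h1, ?_⟩⟩
    have e : x - y + (y - z) = x - z := by ring
    rw [e]
    exact h2
  · rintro ⟨j, u, w⟩ hq
    obtain ⟨-, hq⟩ := Finset.mem_product.mp hq
    obtain ⟨-, h1, h2⟩ := Finset.mem_filter.mp hq
    refine Finset.mem_filter.mpr ⟨Finset.mem_univ _, ?_, ?_⟩
    · have e1 : u + j - j = u := by ring
      have e2 : j - (j - w) = w := by ring
      rw [e1, e2]
      exact h1
    · have e3 : u + j - (j - w) = u + w := by ring
      have e2 : j - (j - w) = w := by ring
      rw [e2, e3]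
      exact h2
  · rintro ⟨x, y, z⟩ -
    dsimp only
    have e1 : x - y + y = x := by ring
    have e2 : y - (y - z) = z := by ring
    rw [e1, e2]
  · rintro ⟨j, u, w⟩ -
    dsimp only
    have e1 : u + j - j = u := by ring
    have e2 : j - (j - w) = w := by ring
    rw [e1, e2]

lemma coe_eq_of_int {p x y : ℝ} (k : ℤ) (h : x - y = k * p) : (x : AddCircle p) = y := by
  rw [← sub_eq_zero, ← AddCircle.coe_sub, AddCircle.coe_eq_zero_iff]
  exact ⟨k, by rw [zsmul_eq_mul]; exact h.symm⟩

lemma dist_coe (hn : 0 < n) (a : AddCircle (2 * π)) (i j : ZMod n) :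
    dist (a + (((i.val : ℝ) * (2 * π) / n : ℝ) : AddCircle (2 * π)))
         (a + (((j.val : ℝ) * (2 * π) / n : ℝ) : AddCircle (2 * π)))
      = (2 * π) * ((md n (i - j) : ℝ) / n) := by
  haveI : Fact (0 < 2 * π) := ⟨Real.two_pi_pos⟩
  set d := (i - j).val with hd
  have hdn : d < n := ZMod.val_lt _
  have hmod : (d + j.val) % n = i.val := by
    rw [hd, ← ZMod.val_add, sub_add_cancel]
  have hnat : n * ((d + j.val) / n) + i.val = d + j.val := by
    conv_rhs => rw [← Nat.div_add_mod (d + j.val) n]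
    rw [hmod]
  have hn' : (n : ℝ) ≠ 0 := Nat.cast_ne_zero.mpr hn.ne'
  have hq : ((i.val : ℝ) - j.val - d) = -((((d + j.val) / n : ℕ) : ℝ)) * n := by
    have hc : (n : ℝ) * (((d + j.val) / n : ℕ) : ℝ) + (i.val : ℝ) = (d : ℝ) + (j.val : ℝ) := by
      exact_mod_cast congrArg (fun t : ℕ => (t : ℝ)) hnat
    linarith
  rw [dist_eq_norm, add_sub_add_left_eq_sub, ← AddCircle.coe_sub]
  have hcoe : (((i.val : ℝ) * (2 * π) / n - (j.val : ℝ) * (2 * π) / n : ℝ) : AddCircle (2 * π))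
      = (((d : ℝ) / (n : ℝ) * (2 * π) : ℝ) : AddCircle (2 * π)) := by
    apply coe_eq_of_int (-((((d + j.val) / n : ℕ) : ℤ)))
    have e : (i.val : ℝ) * (2 * π) / n - (j.val : ℝ) * (2 * π) / n - (d : ℝ) / n * (2 * π)
        = ((i.val : ℝ) - j.val - d) * (2 * π) / n := by ring
    rw [e, hq, Int.cast_neg, Int.cast_natCast]
    field_simp
  rw [hcoe, AddCircle.norm_div_natCast, Nat.mod_eq_of_lt hdn]
  rfl

end ATAux

/-- Any `n`-element subset of the circle which is evenly spread around the circle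
has exactly `2n⌊n/4⌋ + n` 3-term arithmetic progressions. -/
theorem AT_evenlySpread (n : ℕ) (hn : 0 < n) (A : Set (AddCircle (2 * π)))
    (hA : A.Finite) (hcard : A.ncard = n) (hspread : EvenlySpread n A) :
    (AT A).ncard = 2 * n * (n / 4) + n := by
  classical
  haveI : NeZero n := ⟨hn.ne'⟩
  obtain ⟨a, hAeq⟩ := hspread
  set g : ZMod n → AddCircle (2 * π) :=
    fun i => a + (((i.val : ℝ) * (2 * π) / n : ℝ) : AddCircle (2 * π)) with hg
  have hAr : A = Set.range g := by
    rw [hAeq]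
    ext x
    simp only [Set.mem_setOf_eq, Set.mem_range, hg]
    constructor
    · rintro ⟨k, hk, rfl⟩
      exact ⟨(k : ZMod n), by rw [ZMod.val_cast_of_lt hk]⟩
    · rintro ⟨i, rfl⟩
      exact ⟨i.val, ZMod.val_lt i, rfl⟩
  have hdist : ∀ i j : ZMod n, dist (g i) (g j) = (2 * π) * ((ATAux.md n (i - j) : ℝ) / n) :=
    fun i j => ATAux.dist_coe hn a i j
  have h2π : (0 : ℝ) < 2 * π := Real.two_pi_pos
  have hn' : (0 : ℝ) < n := by exact_mod_cast hn
  have key : ∀ x y : ℕ, (2 * π) * ((x : ℝ) / n) = (2 * π) * ((y : ℝ) / n) ↔ x = y := by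
    intro x y
    constructor
    · intro h
      have h1 := mul_left_cancel₀ h2π.ne' h
      rw [div_eq_div_iff hn'.ne' hn'.ne'] at h1
      exact_mod_cast mul_right_cancel₀ hn'.ne' h1
    · rintro rfl; rfl
  have key2 : ∀ y z : ℕ,
      (2 * π) * ((y : ℝ) / n) = (2 * π) * ((z : ℝ) / n) / 2 ↔ z = 2 * y := by
    intro y z
    rw [eq_div_iff (two_ne_zero)]
    have e : (2 * π) * ((y : ℝ) / n) * 2 = (2 * π) * (((2 * y : ℕ) : ℝ) / n) := by
      push_cast; ring
    rw [e, key]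
    exact eq_comm
  have hAP : ∀ i j k : ZMod n, IsAP3 (g i) (g j) (g k) ↔
      (ATAux.md n (i - j) = ATAux.md n (j - k) ∧
        ATAux.md n (i - k) = 2 * ATAux.md n (j - k)) := by
    intro i j k
    rw [IsAP3, hdist, hdist, hdist, key, key2]
  have hginj : Function.Injective g := by
    intro i j hij
    by_contra hne
    have hsub : i - j ≠ 0 := sub_ne_zero.mpr hne
    have hmd : ATAux.md n (i - j) ≠ 0 := fun h => hsub (ATAux.md_eq_zero_iff.1 h)
    have hmdR : (0 : ℝ) < (ATAux.md n (i - j) : ℝ) := by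
      exact_mod_cast Nat.pos_of_ne_zero hmd
    have h0 : dist (g i) (g j) = 0 := by rw [hij, dist_self]
    rw [hdist] at h0
    have hpos : 0 < 2 * π * ((ATAux.md n (i - j) : ℝ) / n) :=
      mul_pos h2π (div_pos hmdR hn')
    linarith
  have hΦinj : Function.Injective
      (fun p : ZMod n × ZMod n × ZMod n => (g p.1, g p.2.1, g p.2.2)) := by
    rintro ⟨x1, y1, z1⟩ ⟨x2, y2, z2⟩ h
    simp only [Prod.ext_iff] at h ⊢
    exact ⟨hginj h.1, hginj h.2.1, hginj h.2.2⟩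
  have hATeq : AT A = (fun p : ZMod n × ZMod n × ZMod n => (g p.1, g p.2.1, g p.2.2)) ''
      ↑(Finset.univ.filter fun p : ZMod n × ZMod n × ZMod n =>
        ATAux.md n (p.1 - p.2.1) = ATAux.md n (p.2.1 - p.2.2) ∧
        ATAux.md n (p.1 - p.2.2) = 2 * ATAux.md n (p.2.1 - p.2.2)) := by
    ext ⟨x, y, z⟩
    simp only [AT, Set.mem_setOf_eq, Set.mem_image, Finset.mem_coe, Finset.mem_filter,
      Finset.mem_univ, true_and]
    constructor
    · rintro ⟨hx, hy, hz, hap⟩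
      rw [hAr] at hx hy hz
      obtain ⟨i, rfl⟩ := hx
      obtain ⟨j, rfl⟩ := hy
      obtain ⟨k, rfl⟩ := hz
      exact ⟨(i, j, k), (hAP i j k).1 hap, rfl⟩
    · rintro ⟨⟨i, j, k⟩, hc, heq⟩
      simp only [Prod.ext_iff] at heq
      obtain ⟨h1, h2, h3⟩ := heq
      rw [← h1, ← h2, ← h3]
      refine ⟨?_, ?_, ?_, (hAP i j k).2 hc⟩ <;>
        · rw [hAr]; exact Set.mem_range_self _
  rw [hATeq, Set.ncard_image_of_injective _ hΦinj, Set.ncard_coe_finset, ATAux.card_T]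
end

section
/- For every positive integer n and every n-element subset A of S¹, |AT_{S¹}(A)| ≤ n·⌊n/2⌋ + n. -/
open Real

noncomputable section
open Set
namespace ATC

abbrev p : ℝ := 2 * π
lemma hp : (0:ℝ) < p := by positivity
abbrev C := AddCircle (2 * π)

noncomputable def ccw (u : C) : ℝ := (QuotientAddGroup.equivIcoMod hp 0 u : ℝ)

lemma ccw_mem (u : C) : ccw u ∈ Ico (0:ℝ) (2*π) := by
  have := (QuotientAddGroup.equivIcoMod hp 0 u).2
  simpa [ccw] using this

lemma coe_ccw (u : C) : ((ccw u : ℝ) : C) = u := by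
  exact_mod_cast (QuotientAddGroup.equivIcoMod hp 0).symm_apply_apply u

lemma ccw_coe {x : ℝ} (hx : x ∈ Ico (0:ℝ) (2*π)) : ccw ((x : ℝ) : C) = x := by
  have h : ccw ((x:ℝ) : C) = toIcoMod hp 0 x := by
    simp [ccw, QuotientAddGroup.equivIcoMod_coe]
  rw [h, toIcoMod_eq_self hp]
  simpa using hx

end ATC

namespace ATC
open ATC

lemma ccw_inj {u v : C} (h : ccw u = ccw v) : u = v := by
  rw [← coe_ccw u, ← coe_ccw v, h]

lemma ccw_zero : ccw (0 : C) = 0 := by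
  have : ((0:ℝ) : C) = (0 : C) := by norm_cast
  rw [← this, ccw_coe]
  constructor <;> [rfl; positivity]

lemma ccw_eq_zero {u : C} (h : ccw u = 0) : u = 0 := by
  rw [← coe_ccw u, h]; norm_cast

lemma ccw_neg {u : C} (hu : u ≠ 0) : ccw (-u) = 2*π - ccw u := by
  have h1 := ccw_mem u
  have h2 : ccw u ≠ 0 := fun h => hu (ccw_eq_zero h)
  have hmem : 2*π - ccw u ∈ Ico (0:ℝ) (2*π) := by
    constructor <;> [linarith [h1.2]; 
      (have := h1.1; have : 0 < ccw u := lt_of_le_of_ne this (Ne.symm h2); linarith)]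
  have e : ((2*π - ccw u : ℝ) : C) = ((2*π:ℝ):C) - ((ccw u : ℝ):C) := by norm_cast
  have e2 : ((2*π : ℝ) : C) = 0 := by
    rw [AddCircle.coe_eq_zero_iff]
    exact ⟨1, by simp⟩
  have : ((2*π - ccw u : ℝ) : C) = -u := by
    rw [e, e2, coe_ccw]; abel
  rw [← this, ccw_coe hmem]

lemma norm_eq_min (u : C) : ‖u‖ = min (ccw u) (2*π - ccw u) := by
  have hπ : (0:ℝ) < π := Real.pi_pos
  set r := ccw u with hr
  have hmem := ccw_mem u
  have h0 : (0:ℝ) ≤ r := hmem.1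
  have h2 : r < 2*π := hmem.2
  have hu : u = ((r:ℝ) : C) := (coe_ccw u).symm
  rw [hu, AddCircle.norm_eq]
  have hround : round ((2*π)⁻¹ * r) = if r < π then 0 else 1 := by
    rw [round_eq]
    split_ifs with hc
    · rw [Int.floor_eq_zero_iff]
      constructor
      · positivity
      · have : (2*π)⁻¹ * r < (2*π)⁻¹ * π := by
          apply mul_lt_mul_of_pos_left hc
          positivity
        have h' : (2*π)⁻¹ * π = 1/2 := by field_simp
        rw [h'] at this
        linarith
    · push_neg at hc
      have hlo : (1:ℝ)/2 ≤ (2*π)⁻¹ * r := by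
        have : (2*π)⁻¹ * π ≤ (2*π)⁻¹ * r := by
          apply mul_le_mul_of_nonneg_left hc
          positivity
        have h' : (2*π)⁻¹ * π = 1/2 := by field_simp
        linarith [h' ▸ this]
      have hhi : (2*π)⁻¹ * r < 1 := by
        have : (2*π)⁻¹ * r < (2*π)⁻¹ * (2*π) := by
          apply mul_lt_mul_of_pos_left h2
          positivity
        rw [inv_mul_cancel₀ (by positivity : (2*π:ℝ) ≠ 0)] at this
        exact this
      have : ⌊(2*π)⁻¹ * r + 1/2⌋ = 1 := by
        rw [Int.floor_eq_iff]
        constructor <;> push_cast <;> linarith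
      exact this
  rw [hround]
  split_ifs with hc
  · rw [Int.cast_zero, zero_mul, sub_zero, abs_of_nonneg h0]
    rw [min_eq_left (by linarith)]
  · push_neg at hc
    rw [Int.cast_one, one_mul, abs_of_nonpos (by linarith)]
    rw [min_eq_right (by linarith)]
    ring

end ATC

namespace ATC

lemma norm_le_pi (u : C) : ‖u‖ ≤ π := by
  rw [norm_eq_min]
  have h := ccw_mem u
  rcases le_or_gt (ccw u) π with h1 | h1
  · exact le_trans (min_le_left _ _) h1
  · exact le_trans (min_le_right _ _) (by linarith)

lemma eq_or_neg_of_norm_eq {u v : C} (h : ‖u‖ = ‖v‖) : u = v ∨ u = -v := by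
  rcases eq_or_ne v 0 with rfl | hv
  · left
    have : ‖u‖ = 0 := by simpa using h
    rw [norm_eq_zero] at this; exact this
  rcases eq_or_ne u 0 with rfl | hu
  · have : ‖v‖ = 0 := by simpa using h.symm
    rw [norm_eq_zero] at this; exact absurd this hv
  rw [norm_eq_min, norm_eq_min] at h
  have hmu := ccw_mem u; have hmv := ccw_mem v
  rcases min_cases (ccw u) (2*π - ccw u) with ⟨e1, _⟩ | ⟨e1, _⟩ <;>
    rcases min_cases (ccw v) (2*π - ccw v) with ⟨e2, _⟩ | ⟨e2, _⟩ <;>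
      rw [e1, e2] at h
  · exact Or.inl (ccw_inj h)
  · right
    apply ccw_inj
    rw [ccw_neg hv]; exact h
  · right
    have : ccw u = 2*π - ccw v := by
      have hvn := ccw_neg hv
      -- h : 2π - ccw u = ccw v
      linarith
    apply ccw_inj; rw [ccw_neg hv]; exact this
  · have : ccw u = ccw v := by linarith
    exact Or.inl (ccw_inj this)

lemma ap_structure {a b c : C} (h : IsAP3 a b c) :
    (a = b ∧ b = c) ∨ (∃ t : C, t ≠ 0 ∧ ‖t‖ ≤ π/2 ∧ b = a + t ∧ c = b + t) := by
  obtain ⟨h1, h2⟩ := h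
  have e1 : ‖b - a‖ = ‖c - b‖ := by
    have ha : dist a b = ‖b - a‖ := by rw [dist_eq_norm, ← norm_neg]; congr 1; abel
    have hb : dist b c = ‖c - b‖ := by rw [dist_eq_norm, ← norm_neg]; congr 1; abel
    rw [ha, hb] at h1; exact h1
  have e2 : ‖c - b‖ = ‖(b - a) + (c - b)‖ / 2 := by
    have hac : dist a c = ‖(b - a) + (c - b)‖ := by
      rw [dist_eq_norm, ← norm_neg]; congr 1; abel
    have hb : dist b c = ‖c - b‖ := by rw [dist_eq_norm, ← norm_neg]; congr 1; abel
    rw [hac, hb] at h2; exact h2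
  rcases eq_or_neg_of_norm_eq e1 with he | he
  · rcases eq_or_ne (c - b) 0 with hu | hune
    · left
      have hs0 : b - a = 0 := by rw [he, hu]
      rw [sub_eq_zero] at hs0 hu
      exact ⟨hs0.symm, hu.symm⟩
    · right
      refine ⟨c - b, hune, ?_, ?_, ?_⟩
      · have hsum : (b - a) + (c - b) = (c - b) + (c - b) := by rw [he]
        rw [hsum] at e2
        have hle := norm_le_pi ((c - b) + (c - b))
        have h2n : ‖(c - b) + (c - b)‖ = 2 * ‖c - b‖ := by linarith
        linarith
      · rw [← he]; abel
      · abel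
  · -- b - a = -(c - b)
    have hz : (b - a) + (c - b) = 0 := by rw [he]; abel
    rw [hz, norm_zero] at e2
    have hu0 : c - b = 0 := by rw [← norm_eq_zero]; linarith
    have hs0 : b - a = 0 := by rw [he, hu0, neg_zero]
    rw [sub_eq_zero] at hs0 hu0
    left
    exact ⟨hs0.symm, hu0.symm⟩

lemma orient {t : C} (ht : t ≠ 0) (hn : ‖t‖ ≤ π/2) :
    (0 < ccw t ∧ ccw t ≤ π/2) ∨ (0 < ccw (-t) ∧ ccw (-t) ≤ π/2) := by
  have hm := ccw_mem t
  have h0 : 0 < ccw t := lt_of_le_of_ne hm.1 (fun h => ht (ccw_eq_zero h.symm))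
  rw [norm_eq_min] at hn
  rcases le_or_gt (ccw t) (π/2) with h | h
  · exact Or.inl ⟨h0, h⟩
  · right
    rw [ccw_neg ht]
    have : min (ccw t) (2*π - ccw t) = 2*π - ccw t := by
      rcases min_cases (ccw t) (2*π - ccw t) with ⟨e, he⟩ | ⟨e, _⟩
      · exfalso; rw [e] at hn; linarith
      · exact e
    rw [this] at hn
    constructor <;> linarith [hm.2]

end ATC

namespace ATC

noncomputable def dl (x y : C) : ℝ := ccw (y - x)

lemma dl_mem (x y : C) : dl x y ∈ Ico (0:ℝ) (2*π) := ccw_mem _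

lemma dl_pos_iff {x y : C} : 0 < dl x y ↔ y ≠ x := by
  constructor
  · intro h hxy
    rw [hxy] at h
    simp only [dl, sub_self, ccw_zero] at h
    exact lt_irrefl _ h
  · intro h
    have := (dl_mem x y).1
    rcases lt_or_eq_of_le this with h' | h'
    · exact h'
    · exfalso
      have : y - x = 0 := ccw_eq_zero h'.symm
      rw [sub_eq_zero] at this
      exact h this

lemma coe_dl (x y : C) : ((dl x y : ℝ) : C) = y - x := coe_ccw _

lemma dl_add (x y z : C) :
    dl x y + dl y z = dl x z ∨ dl x y + dl y z = dl x z + 2*π := by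
  have hc : ((dl x y + dl y z : ℝ) : C) = ((dl x z : ℝ) : C) := by
    have e : ((dl x y + dl y z : ℝ) : C) = ((dl x y:ℝ):C) + ((dl y z:ℝ):C) := by norm_cast
    rw [e, coe_dl, coe_dl, coe_dl]; abel
  have hmem : (dl x y + dl y z) - dl x z ∈ AddSubgroup.zmultiples (2*π) := by
    rw [← QuotientAddGroup.eq_iff_sub_mem]
    exact_mod_cast hc
  rw [AddSubgroup.mem_zmultiples_iff] at hmem
  obtain ⟨k, hk⟩ := hmem
  have hπ := Real.pi_pos
  have h1 := (dl_mem x y); have h2 := (dl_mem y z); have h3 := (dl_mem x z)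
  have hk' : (k : ℝ) * (2*π) = dl x y + dl y z - dl x z := by
    rw [← hk]; simp [zsmul_eq_mul]
  have hk0 : (0:ℤ) ≤ k := by
    by_contra hneg
    push_neg at hneg
    have : (k:ℝ) ≤ -1 := by exact_mod_cast Int.le_sub_one_of_lt hneg
    nlinarith [h1.1, h2.1, h3.2]
  have hk1 : k ≤ 1 := by
    by_contra hbig
    push_neg at hbig
    have : (2:ℝ) ≤ (k:ℝ) := by exact_mod_cast hbig
    nlinarith [h1.2, h2.2, h3.1]
  interval_cases k
  · left; simp at hk'; linarith
  · right; simp at hk'; linarith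

lemma dl_add_rev {x y : C} (h : y ≠ x) : dl x y + dl y x = 2*π := by
  have h0 : dl x x = 0 := by simp [dl, ccw_zero]
  rcases dl_add x y x with he | he
  · exfalso
    rw [h0] at he
    have h1 : 0 < dl x y := dl_pos_iff.mpr h
    have h2 : 0 < dl y x := dl_pos_iff.mpr (fun hh => h hh.symm)
    linarith
  · rw [h0] at he; linarith

noncomputable def Rq (F : Finset C) (b : C) : Finset C :=
  F.filter (fun z => 0 < dl b z ∧ dl b z ≤ π/2)
noncomputable def Lq (F : Finset C) (b : C) : Finset C :=
  F.filter (fun z => 0 < dl z b ∧ dl z b ≤ π/2)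
noncomputable def Btw (F : Finset C) (b b' : C) : Finset C :=
  F.filter (fun z => 0 < dl b z ∧ dl b z < dl b b')

lemma lq_key {b b' z : C} (hD : π ≤ dl b b') (hz : 0 < dl z b' ∧ dl z b' ≤ π/2) :
    dl b z = dl b b' - dl z b' := by
  have hπ := Real.pi_pos
  have h1 := dl_mem b z; have h2 := dl_mem b b'
  have hzb : z ≠ b := by
    intro h; rw [h] at hz; linarith [hz.2]
  rcases dl_add b z b' with he | he
  · linarith
  · exfalso
    have := h1.2
    linarith [hz.2, h2.2]

lemma card_quarter_lt {F : Finset C} {b b' : C} (hD : π < dl b b') :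
    (Rq F b).card + (Lq F b').card ≤ (Btw F b b').card := by
  have hπ := Real.pi_pos
  have hsub : Rq F b ∪ Lq F b' ⊆ Btw F b b' := by
    intro z hz
    rw [Finset.mem_union] at hz
    rcases hz with hz | hz
    · rw [Rq, Finset.mem_filter] at hz
      rw [Btw, Finset.mem_filter]
      exact ⟨hz.1, hz.2.1, by linarith [hz.2.2]⟩
    · rw [Lq, Finset.mem_filter] at hz
      rw [Btw, Finset.mem_filter]
      have hkey := lq_key (le_of_lt hD) hz.2
      refine ⟨hz.1, by linarith [hz.2.1, hz.2.2], by linarith [hz.2.1]⟩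
  have hdisj : Disjoint (Rq F b) (Lq F b') := by
    rw [Finset.disjoint_left]
    intro z hz hz'
    rw [Rq, Finset.mem_filter] at hz
    rw [Lq, Finset.mem_filter] at hz'
    have hkey := lq_key (le_of_lt hD) hz'.2
    linarith [hz.2.2, hz'.2.2]
  calc (Rq F b).card + (Lq F b').card = (Rq F b ∪ Lq F b').card :=
        (Finset.card_union_of_disjoint hdisj).symm
    _ ≤ _ := Finset.card_le_card hsub

lemma card_quarter_eq {F : Finset C} {b b' : C} (hD : dl b b' = π) :
    (Rq F b).card + (Lq F b').card ≤ (Btw F b b').card + 1 := by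
  have hπ := Real.pi_pos
  have hsubR : Rq F b ⊆ Btw F b b' := by
    intro z hz
    rw [Rq, Finset.mem_filter] at hz
    rw [Btw, Finset.mem_filter]
    exact ⟨hz.1, hz.2.1, by rw [hD]; linarith [hz.2.2]⟩
  have hsubL : Lq F b' ⊆ Btw F b b' := by
    intro z hz
    rw [Lq, Finset.mem_filter] at hz
    rw [Btw, Finset.mem_filter]
    have hkey := lq_key (le_of_eq hD.symm) hz.2
    rw [hD] at hkey
    exact ⟨hz.1, by linarith [hz.2.1, hz.2.2], by rw [hD]; linarith [hz.2.1]⟩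
  have hint : Rq F b ∩ Lq F b' ⊆ {b + ((π/2 : ℝ) : C)} := by
    intro z hz
    rw [Finset.mem_inter] at hz
    obtain ⟨hz1, hz2⟩ := hz
    rw [Rq, Finset.mem_filter] at hz1
    rw [Lq, Finset.mem_filter] at hz2
    have hkey := lq_key (le_of_eq hD.symm) hz2.2
    rw [hD] at hkey
    have : dl b z = π/2 := by linarith [hz1.2.2, hz2.2.2]
    have hcoe : ((π/2 : ℝ) : C) = z - b := by rw [← this]; exact coe_dl b z
    rw [Finset.mem_singleton]
    rw [hcoe]; abel
  have := Finset.card_union_add_card_inter (Rq F b) (Lq F b')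
  have h1 : (Rq F b ∪ Lq F b').card ≤ (Btw F b b').card :=
    Finset.card_le_card (Finset.union_subset hsubR hsubL)
  have h2 : (Rq F b ∩ Lq F b').card ≤ 1 := by
    calc (Rq F b ∩ Lq F b').card ≤ ({b + ((π/2 : ℝ) : C)} : Finset C).card :=
          Finset.card_le_card hint
      _ = 1 := Finset.card_singleton _
  omega

end ATC

namespace ATC

lemma ccw_injective : Function.Injective ccw := fun _ _ h => ccw_inj h

section Enum
variable (F : Finset C)

noncomputable def G : Finset ℝ := F.image ccw

lemma G_card : (G F).card = F.card := Finset.card_image_of_injective _ ccw_injective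

noncomputable def io (i : Fin F.card) : ℝ := ((G F).orderIsoOfFin (G_card F) i : ℝ)

noncomputable def en (i : Fin F.card) : C := ((io F i : ℝ) : C)

lemma io_spec (i : Fin F.card) : ∃ a ∈ F, ccw a = io F i := by
  have h : ((G F).orderIsoOfFin (G_card F) i : ℝ) ∈ G F :=
    ((G F).orderIsoOfFin (G_card F) i).2
  simp only [G, Finset.mem_image] at h
  exact h

lemma io_mem (i : Fin F.card) : io F i ∈ Ico (0:ℝ) (2*π) := by
  obtain ⟨a, _, ha⟩ := io_spec F i
  rw [← ha]; exact ccw_mem a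

lemma ccw_en (i : Fin F.card) : ccw (en F i) = io F i := by
  rw [en, ccw_coe (io_mem F i)]

lemma en_mem (i : Fin F.card) : en F i ∈ F := by
  obtain ⟨a, haF, ha⟩ := io_spec F i
  have : en F i = a := by rw [en, ← ha, coe_ccw]
  rw [this]; exact haF

lemma io_strictMono : StrictMono (io F) := by
  intro i j hij
  have := ((G F).orderIsoOfFin (G_card F)).strictMono hij
  exact_mod_cast this

lemma en_inj : Function.Injective (en F) := by
  intro i j h
  have : io F i = io F j := by
    rw [← ccw_en F i, ← ccw_en F j, h]
  exact (io_strictMono F).injective this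

lemma en_surj {a : C} (ha : a ∈ F) : ∃ i, en F i = a := by
  have hmem : ccw a ∈ G F := Finset.mem_image_of_mem _ ha
  obtain ⟨i, hi⟩ := ((G F).orderIsoOfFin (G_card F)).surjective ⟨ccw a, hmem⟩
  refine ⟨i, ?_⟩
  have h2 : io F i = ccw a := by rw [io, hi]
  rw [en, h2, coe_ccw]

lemma card_filter_en (pred : C → Prop) [DecidablePred pred] :
    (F.filter pred).card = (Finset.univ.filter (fun m => pred (en F m))).card := by
  symm
  apply Finset.card_bij (fun m _ => en F m)
  · intro m hm
    rw [Finset.mem_filter] at hm ⊢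
    exact ⟨en_mem F m, hm.2⟩
  · intro m _ m' _ h
    exact en_inj F h
  · intro a ha
    rw [Finset.mem_filter] at ha
    obtain ⟨i, hi⟩ := en_surj F ha.1
    refine ⟨i, ?_, hi⟩
    rw [Finset.mem_filter]
    exact ⟨Finset.mem_univ _, by rw [hi]; exact ha.2⟩

lemma sum_en (f : C → ℕ) :
    (∑ i : Fin F.card, f (en F i)) = ∑ b ∈ F, f b := by
  apply Finset.sum_bij (fun m _ => en F m)
  · intro m _; exact en_mem F m
  · intro m _ m' _ h; exact en_inj F h
  · intro a ha
    obtain ⟨i, hi⟩ := en_surj F ha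
    exact ⟨i, Finset.mem_univ _, hi⟩
  · intro m _; rfl

lemma dl_en {i m : Fin F.card} (h : i ≠ m) :
    dl (en F i) (en F m) = if io F i < io F m then io F m - io F i
      else io F m - io F i + 2*π := by
  have hπ := Real.pi_pos
  have hii := io_mem F i
  have him := io_mem F m
  have hne : io F i ≠ io F m := fun hh => h ((io_strictMono F).injective hh)
  have hsub : en F m - en F i = ((io F m - io F i : ℝ) : C) := by
    rw [en, en]; norm_cast
  split_ifs with hlt
  · rw [dl, hsub, ccw_coe]
    constructor
    · linarith
    · linarith [him.2, hii.1]
  · push_neg at hlt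
    have hlt' : io F m < io F i := lt_of_le_of_ne hlt hne.symm
    have hcoe : ((io F m - io F i : ℝ) : C) = ((io F m - io F i + 2*π : ℝ) : C) := by
      have h0 : ((2*π : ℝ) : C) = 0 := by
        rw [AddCircle.coe_eq_zero_iff]; exact ⟨1, by simp⟩
      calc ((io F m - io F i : ℝ) : C)
          = ((io F m - io F i : ℝ) : C) + ((2*π : ℝ) : C) := by rw [h0, add_zero]
        _ = ((io F m - io F i + 2*π : ℝ) : C) := by norm_cast
    rw [dl, hsub, hcoe, ccw_coe]
    constructor
    · linarith [him.1, hii.2]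
    · linarith [hlt']

end Enum
end ATC

namespace ATC

lemma card_fin_filter (n : ℕ) (P : ℕ → Prop) [DecidablePred P] :
    (Finset.univ.filter (fun m : Fin n => P m.val)).card = ((Finset.range n).filter P).card := by
  apply Finset.card_bij (fun m _ => m.val)
  · intro m hm
    rw [Finset.mem_filter] at hm ⊢
    exact ⟨Finset.mem_range.mpr m.isLt, hm.2⟩
  · intro m _ m' _ h
    exact Fin.val_injective h
  · intro a ha
    rw [Finset.mem_filter, Finset.mem_range] at ha
    exact ⟨⟨a, ha.1⟩, by rw [Finset.mem_filter]; exact ⟨Finset.mem_univ _, ha.2⟩, rfl⟩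

lemma btw_count (F : Finset C) {i j : Fin F.card} (hij : i ≠ j) :
    (Btw F (en F i) (en F j)).card =
      (if (i:ℕ) < (j:ℕ) then (j:ℕ) - (i:ℕ) - 1 else (j:ℕ) + (F.card - (i:ℕ)) - 1) := by
  have hπ := Real.pi_pos
  have hmono := io_strictMono F
  have hval : ∀ a b : Fin F.card, a < b ↔ io F a < io F b :=
    fun a b => (hmono.lt_iff_lt).symm
  have hchar : ∀ m : Fin F.card,
      ((0 < dl (en F i) (en F m) ∧ dl (en F i) (en F m) < dl (en F i) (en F j)) ↔
        (if (i:ℕ) < (j:ℕ) then ((i:ℕ) < (m:ℕ) ∧ (m:ℕ) < (j:ℕ))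
          else ((i:ℕ) < (m:ℕ) ∨ (m:ℕ) < (j:ℕ)))) := by
    intro m
    have hIm := io_mem F i
    have hMm := io_mem F m
    have hJm := io_mem F j
    have hdlj := dl_en F hij
    rcases eq_or_ne i m with rfl | him
    · have h0 : dl (en F i) (en F i) = 0 := by
        rw [dl, sub_self]; exact ccw_zero
      rw [h0]
      split_ifs with hc <;> simp <;> omega
    · have hpos : 0 < dl (en F i) (en F m) :=
        dl_pos_iff.mpr (fun hh => him (en_inj F hh.symm))
      have hdlm := dl_en F him
      have hfin : ((i:ℕ) < (m:ℕ)) ↔ (i < m) := by rw [Fin.lt_def]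
      have hfinj : ((i:ℕ) < (j:ℕ)) ↔ (i < j) := by rw [Fin.lt_def]
      have hfmj : ((m:ℕ) < (j:ℕ)) ↔ (m < j) := by rw [Fin.lt_def]
      rcases lt_or_gt_of_ne him with him' | him' <;>
        rcases lt_or_gt_of_ne hij with hij' | hij'
      · -- i < m, i < j
        have e1 : dl (en F i) (en F m) = io F m - io F i := by
          rw [hdlm, if_pos ((hval i m).mp him')]
        have e2 : dl (en F i) (en F j) = io F j - io F i := by
          rw [hdlj, if_pos ((hval i j).mp hij')]
        have hiom := (hval i m).mp him'
        rw [e1, e2, if_pos (hfinj.mpr hij')]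
        constructor
        · rintro ⟨-, h⟩
          exact ⟨hfin.mpr him', hfmj.mpr ((hval m j).mpr (by linarith))⟩
        · rintro ⟨-, h⟩
          have := (hval m j).mp (hfmj.mp h)
          exact ⟨by linarith, by linarith⟩
      · -- i < m, j < i
        have e1 : dl (en F i) (en F m) = io F m - io F i := by
          rw [hdlm, if_pos ((hval i m).mp him')]
        have e2 : dl (en F i) (en F j) = io F j - io F i + 2*π := by
          rw [hdlj, if_neg (by rw [not_lt]; exact le_of_lt ((hval j i).mp hij'))]
        have hiom := (hval i m).mp him'
        rw [e1, e2, if_neg (by rw [not_lt]; exact Nat.le_of_lt (Fin.lt_def.mp hij'))]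
        constructor
        · rintro ⟨-, -⟩
          exact Or.inl (hfin.mpr him')
        · intro _
          exact ⟨by linarith, by linarith [hMm.2, hJm.1]⟩
      · -- m < i, i < j
        have e1 : dl (en F i) (en F m) = io F m - io F i + 2*π := by
          rw [hdlm, if_neg (by rw [not_lt]; exact le_of_lt ((hval m i).mp him'))]
        have e2 : dl (en F i) (en F j) = io F j - io F i := by
          rw [hdlj, if_pos ((hval i j).mp hij')]
        rw [e1, e2, if_pos (hfinj.mpr hij')]
        constructor
        · rintro ⟨-, h⟩
          exfalso
          linarith [hJm.2, hMm.1]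
        · rintro ⟨h, -⟩
          exfalso
          have h1 := Fin.lt_def.mp him'
          omega
      · -- m < i, j < i
        have e1 : dl (en F i) (en F m) = io F m - io F i + 2*π := by
          rw [hdlm, if_neg (by rw [not_lt]; exact le_of_lt ((hval m i).mp him'))]
        have e2 : dl (en F i) (en F j) = io F j - io F i + 2*π := by
          rw [hdlj, if_neg (by rw [not_lt]; exact le_of_lt ((hval j i).mp hij'))]
        have hiom := (hval m i).mp him'
        rw [e1, e2, if_neg (by rw [not_lt]; exact Nat.le_of_lt (Fin.lt_def.mp hij'))]
        constructor
        · rintro ⟨-, h⟩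
          exact Or.inr (hfmj.mpr ((hval m j).mpr (by linarith)))
        · rintro (h | h)
          · exfalso
            have h1 := Fin.lt_def.mp him'
            omega
          · have := (hval m j).mp (hfmj.mp h)
            exact ⟨by linarith [hMm.1, hIm.2], by linarith⟩
  have hrw : (Btw F (en F i) (en F j)).card =
      (Finset.univ.filter (fun m : Fin F.card =>
        (if (i:ℕ) < (j:ℕ) then ((i:ℕ) < (m:ℕ) ∧ (m:ℕ) < (j:ℕ))
          else ((i:ℕ) < (m:ℕ) ∨ (m:ℕ) < (j:ℕ))))).card := by
    rw [Btw, card_filter_en F (fun z => 0 < dl (en F i) z ∧ dl (en F i) z < dl (en F i) (en F j))]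
    congr 1
    apply Finset.filter_congr
    intro m _
    rw [hchar m]
  rw [hrw]
  have hjn : (j:ℕ) < F.card := j.isLt
  have hin : (i:ℕ) < F.card := i.isLt
  split_ifs with hc
  · have hb : (Finset.filter (fun m : Fin F.card => (i:ℕ) < (m:ℕ) ∧ (m:ℕ) < (j:ℕ))
        Finset.univ).card = (Finset.Ioo (i:ℕ) (j:ℕ)).card := by
      apply Finset.card_bij (fun (m : Fin F.card) _ => (m : ℕ))
      · intro m hm
        rw [Finset.mem_filter] at hm
        rw [Finset.mem_Ioo]
        exact hm.2
      · intro m _ m' _ h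
        exact Fin.val_injective h
      · intro a ha
        rw [Finset.mem_Ioo] at ha
        refine ⟨⟨a, by omega⟩, ?_, rfl⟩
        rw [Finset.mem_filter]
        exact ⟨Finset.mem_univ _, ha⟩
    rw [hb, Nat.card_Ioo]
  · have hb : (Finset.filter (fun m : Fin F.card => (i:ℕ) < (m:ℕ) ∨ (m:ℕ) < (j:ℕ))
        Finset.univ).card = (Finset.Ioo (i:ℕ) F.card ∪ Finset.Iio (j:ℕ)).card := by
      apply Finset.card_bij (fun (m : Fin F.card) _ => (m : ℕ))
      · intro m hm
        rw [Finset.mem_filter] at hm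
        rw [Finset.mem_union, Finset.mem_Ioo, Finset.mem_Iio]
        rcases hm.2 with h | h
        · exact Or.inl ⟨h, m.isLt⟩
        · exact Or.inr h
      · intro m _ m' _ h
        exact Fin.val_injective h
      · intro a ha
        rw [Finset.mem_union, Finset.mem_Ioo, Finset.mem_Iio] at ha
        have han : a < F.card := by rcases ha with h | h <;> omega
        refine ⟨⟨a, han⟩, ?_, rfl⟩
        rw [Finset.mem_filter]
        refine ⟨Finset.mem_univ _, ?_⟩
        rcases ha with h | h
        · exact Or.inl h.1
        · exact Or.inr h
    rw [hb, Finset.card_union_of_disjoint, Nat.card_Ioo, Nat.card_Iio]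
    · have hij' : (j:ℕ) ≠ (i:ℕ) := fun hh => hij (Fin.ext hh.symm)
      omega
    · rw [Finset.disjoint_left]
      intro a ha ha'
      rw [Finset.mem_Ioo] at ha
      rw [Finset.mem_Iio] at ha'
      omega

end ATC

namespace ATC

noncomputable def vv (F : Finset C) (b : C) : ℕ := min (Lq F b).card (Rq F b).card

lemma sig_lemmas (n k i : ℕ) (hi : i < n) (hk : 0 < k) (hkn : k < n) :
    (i + k) % n = (if i + k < n then i + k else i + k - n) ∧ (i + k) % n ≠ i := by
  have h2n : i + k < 2 * n := by omega
  have hmod : (i + k) % n = if i + k < n then i + k else i + k - n := by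
    split_ifs with h
    · exact Nat.mod_eq_of_lt h
    · push_neg at h
      rw [Nat.mod_eq_sub_mod h]
      exact Nat.mod_eq_of_lt (by omega)
  refine ⟨hmod, ?_⟩
  rw [hmod]
  split_ifs with h <;> omega

lemma pair_bound (F : Finset C) (hn2 : 2 ≤ F.card) (i j : Fin F.card)
    (hjv : (j:ℕ) = ((i:ℕ) + F.card / 2) % F.card) :
    vv F (en F i) + vv F (en F j) ≤ F.card / 2 := by
  have hπ := Real.pi_pos
  have hk1 : 0 < F.card / 2 := by omega
  have hkn : F.card / 2 < F.card := by omega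
  obtain ⟨hmod, hne⟩ := sig_lemmas F.card (F.card / 2) (i:ℕ) i.isLt hk1 hkn
  have hij : i ≠ j := by
    intro h
    apply hne
    rw [← hjv, h]
  have hbne : en F i ≠ en F j := fun h => hij (en_inj F h)
  have hiv : (i:ℕ) < F.card := i.isLt
  have hcnt1 : (Btw F (en F i) (en F j)).card = F.card / 2 - 1 := by
    rw [btw_count F hij]
    rw [hjv, hmod]
    split_ifs with h2 h3 h3 <;> omega
  have hcnt2 : (Btw F (en F j) (en F i)).card = F.card - F.card / 2 - 1 := by
    rw [btw_count F hij.symm]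
    rw [hjv, hmod]
    split_ifs with h2 h3 h3 <;> omega
  have hvv1 : vv F (en F i) ≤ (Rq F (en F i)).card := min_le_right _ _
  have hvv1' : vv F (en F i) ≤ (Lq F (en F i)).card := min_le_left _ _
  have hvv2 : vv F (en F j) ≤ (Rq F (en F j)).card := min_le_right _ _
  have hvv2' : vv F (en F j) ≤ (Lq F (en F j)).card := min_le_left _ _
  rcases lt_trichotomy (dl (en F i) (en F j)) π with hD | hD | hD
  · -- reverse direction is > π
    have hrev : dl (en F j) (en F i) = 2*π - dl (en F i) (en F j) := by
      have := dl_add_rev (show en F j ≠ en F i from hbne.symm)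
      linarith
    have hgt : π < dl (en F j) (en F i) := by
      have hpos : 0 < dl (en F i) (en F j) := dl_pos_iff.mpr hbne.symm
      rw [hrev]; linarith
    have := card_quarter_lt (F := F) hgt
    rw [hcnt2] at this
    omega
  · have := card_quarter_eq (F := F) hD
    rw [hcnt1] at this
    omega
  · have := card_quarter_lt (F := F) hD
    rw [hcnt1] at this
    omega

lemma vv_zero_of_small (F : Finset C) (h1 : F.card ≤ 1) (b : C) (hb : b ∈ F) : vv F b = 0 := by
  have : Lq F b = ∅ := by
    rw [Finset.eq_empty_iff_forall_notMem]
    intro z hz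
    rw [Lq, Finset.mem_filter] at hz
    have hzb : z ≠ b := by
      intro h
      rw [h] at hz
      have : dl b b = 0 := by rw [dl, sub_self]; exact ccw_zero
      linarith [hz.2.1]
    have : ({z, b} : Finset C) ⊆ F := by
      intro w hw
      rw [Finset.mem_insert, Finset.mem_singleton] at hw
      rcases hw with rfl | rfl
      · exact hz.1
      · exact hb
    have hcard2 : ({z, b} : Finset C).card = 2 := Finset.card_pair hzb
    have := Finset.card_le_card this
    omega
  rw [vv, this]
  simp

lemma main_sum_bound (F : Finset C) :
    2 * (∑ b ∈ F, vv F b) ≤ F.card * (F.card / 2) := by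
  rcases le_or_gt F.card 1 with hsmall | hbig
  · have : (∑ b ∈ F, vv F b) = 0 := by
      apply Finset.sum_eq_zero
      intro b hb
      exact vv_zero_of_small F hsmall b hb
    rw [this]
    omega
  · have hn2 : 2 ≤ F.card := hbig
    have hkn : F.card / 2 < F.card := by omega
    set sig : Fin F.card → Fin F.card :=
      fun i => ⟨((i:ℕ) + F.card / 2) % F.card, Nat.mod_lt _ (by omega)⟩ with hsig
    have hsig_inj : Function.Injective sig := by
      intro a b h
      have ha := (sig_lemmas F.card (F.card / 2) (a:ℕ) a.isLt (by omega) hkn).1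
      have hb := (sig_lemmas F.card (F.card / 2) (b:ℕ) b.isLt (by omega) hkn).1
      have hval : ((a:ℕ) + F.card / 2) % F.card = ((b:ℕ) + F.card / 2) % F.card := by
        have := congrArg Fin.val h
        simpa [hsig] using this
      apply Fin.ext
      rw [ha, hb] at hval
      have hA := a.isLt; have hB := b.isLt
      split_ifs at hval <;> omega
    have hsig_bij : Function.Bijective sig :=
      (Finite.injective_iff_bijective).mp hsig_inj
    have hreindex : (∑ i : Fin F.card, vv F (en F (sig i))) = ∑ i : Fin F.card, vv F (en F i) :=
      Function.Bijective.sum_comp hsig_bij (fun i => vv F (en F i))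
    have hsum : (∑ i : Fin F.card, (vv F (en F i) + vv F (en F (sig i)))) ≤
        F.card * (F.card / 2) := by
      calc (∑ i : Fin F.card, (vv F (en F i) + vv F (en F (sig i))))
          ≤ ∑ _i : Fin F.card, F.card / 2 := by
            apply Finset.sum_le_sum
            intro i _
            exact pair_bound F hn2 i (sig i) rfl
        _ = F.card * (F.card / 2) := by
            rw [Finset.sum_const, Finset.card_univ, Fintype.card_fin, smul_eq_mul]
    rw [Finset.sum_add_distrib, hreindex, ← two_mul, sum_en] at hsum
    exact hsum

end ATC

namespace ATC
attribute [local instance] Classical.propDecidable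

noncomputable def Ep (F : Finset C) : Finset (C × C) :=
  (F ×ˢ F).filter (fun q => 0 < dl q.1 q.2 ∧ dl q.1 q.2 ≤ π/2 ∧ (q.1 + (q.1 - q.2)) ∈ F)

lemma ep_card (F : Finset C) : (Ep F).card ≤ ∑ b ∈ F, vv F b := by
  have hfst : ∀ q ∈ Ep F, q.1 ∈ F := by
    intro q hq
    rw [Ep, Finset.mem_filter, Finset.mem_product] at hq
    exact hq.1.1
  rw [Finset.card_eq_sum_card_fiberwise hfst]
  apply Finset.sum_le_sum
  intro b _
  have hR : ((Ep F).filter (fun q => q.1 = b)).card ≤ (Rq F b).card := by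
    apply Finset.card_le_card_of_injOn (fun q => q.2)
    · intro q hq
      rw [Finset.mem_coe, Finset.mem_filter] at hq
      obtain ⟨hq1, hq2⟩ := hq
      rw [Ep, Finset.mem_filter, Finset.mem_product] at hq1
      rw [Finset.mem_coe, Rq, Finset.mem_filter]
      rw [hq2] at hq1
      exact ⟨hq1.1.2, hq1.2.1, hq1.2.2.1⟩
    · intro q hq q' hq' h
      rw [Finset.mem_coe, Finset.mem_filter] at hq hq'
      exact Prod.ext (hq.2.trans hq'.2.symm) h
  have hL : ((Ep F).filter (fun q => q.1 = b)).card ≤ (Lq F b).card := by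
    apply Finset.card_le_card_of_injOn (fun q => q.1 + (q.1 - q.2))
    · intro q hq
      rw [Finset.mem_coe, Finset.mem_filter] at hq
      obtain ⟨hq1, hq2⟩ := hq
      rw [Ep, Finset.mem_filter, Finset.mem_product] at hq1
      rw [hq2] at hq1
      rw [Finset.mem_coe, Lq, Finset.mem_filter]; dsimp only; rw [hq2]
      refine ⟨hq1.2.2.2, ?_⟩
      have : dl (b + (b - q.2)) b = dl b q.2 := by
        rw [dl, dl]
        congr 1
        abel
      rw [this]
      exact ⟨hq1.2.1, hq1.2.2.1⟩
    · intro q hq q' hq' h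
      rw [Finset.mem_coe, Finset.mem_filter] at hq hq'
      simp only [hq.2, hq'.2] at h
      have : q.2 = q'.2 := by
        have h2 : b - q.2 = b - q'.2 := by
          exact add_left_cancel h
        have := sub_right_injective h2
        exact this
      exact Prod.ext (hq.2.trans hq'.2.symm) this
  exact le_min hL hR

end ATC


end

open ATC in
/-- Every `n`-element subset `A` of the circle `S¹ = ℝ/2πℤ` satisfies
`|AT_{S¹}(A)| ≤ n⌊n/2⌋ + n`. -/
theorem AT_circle_le (n : ℕ) (hn : 0 < n) (A : Set (AddCircle (2 * π)))
    (hA : A.Finite) (hcard : A.ncard = n) :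
    (AT A).ncard ≤ n * (n / 2) + n := by
  classical
  have hπ := Real.pi_pos
  set F : Finset (AddCircle (2 * π)) := hA.toFinset with hF
  have hFcard : F.card = n := by
    rw [← hcard, hF]
    exact (Set.ncard_eq_toFinset_card A hA).symm
  have hmemF : ∀ x, x ∈ F ↔ x ∈ A := fun x => hA.mem_toFinset
  set S : Set ((AddCircle (2*π)) × (AddCircle (2*π)) × (AddCircle (2*π))) :=
    {p | p.1 = p.2.1 ∧ p.2.1 = p.2.2} with hS
  have hATfin : (AT A).Finite := by
    apply Set.Finite.subset (hA.prod (hA.prod hA))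
    intro q hq
    exact Set.mem_prod.mpr ⟨hq.1, Set.mem_prod.mpr ⟨hq.2.1, hq.2.2.1⟩⟩
  have hdecomp : (AT A).ncard ≤ (AT A ∩ S).ncard + (AT A \ S).ncard := by
    conv_lhs => rw [← Set.inter_union_diff (AT A) S]
    exact Set.ncard_union_le _ _
  have htriv : (AT A ∩ S).ncard ≤ n := by
    have hle : (AT A ∩ S).ncard ≤ A.ncard := by
      refine Set.ncard_le_ncard_of_injOn (fun q => q.1) ?_ ?_ hA
      · intro q hq
        exact hq.1.1
      · intro q hq q' hq' h
        replace h : q.1 = q'.1 := h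
        obtain ⟨hq1, hq2⟩ := hq.2
        obtain ⟨hq1', hq2'⟩ := hq'.2
        have h21 : q.2.1 = q'.2.1 := by rw [← hq1, ← hq1', h]
        have h22 : q.2.2 = q'.2.2 := by rw [← hq2, ← hq2', h21]
        exact Prod.ext h (Prod.ext h21 h22)
    rw [hcard] at hle
    exact hle
  have key : ∀ q ∈ AT A \ S, (q.1 ∈ A ∧ q.2.1 ∈ A ∧ q.2.2 ∈ A) ∧
      ∃ t : AddCircle (2*π), t ≠ 0 ∧ ‖t‖ ≤ π/2 ∧ q.2.1 = q.1 + t ∧ q.2.2 = q.2.1 + t := by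
    intro q hq
    obtain ⟨⟨h1, h2, h3, hap⟩, hns⟩ := hq
    rcases ap_structure hap with htr | hdata
    · exact absurd htr hns
    · exact ⟨⟨h1, h2, h3⟩, hdata⟩
  have habc : ∀ q ∈ AT A \ S, q.1 = q.2.1 + (q.2.1 - q.2.2) := by
    intro q hq
    obtain ⟨-, t, -, -, hb, hc⟩ := key q hq
    rw [hc, hb]
    abel
  have hcab : ∀ q ∈ AT A \ S, q.2.2 = q.2.1 + (q.2.1 - q.1) := by
    intro q hq
    obtain ⟨-, t, -, -, hb, hc⟩ := key q hq
    rw [hc, hb]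
    abel
  have hnontriv : (AT A \ S).ncard ≤ (Ep F).card * 2 := by
    have htarget : ((Ep F ×ˢ (Finset.univ : Finset Bool)) : Finset ((_ × _) × Bool)).card
        = (Ep F).card * 2 := by
      rw [Finset.card_product, Finset.card_univ, Fintype.card_bool]
    rw [← htarget, ← Set.ncard_coe_finset]
    refine Set.ncard_le_ncard_of_injOn (fun q =>
      if 0 < dl q.2.1 q.2.2 ∧ dl q.2.1 q.2.2 ≤ π/2 then ((q.2.1, q.2.2), true)
        else ((q.2.1, q.1), false)) ?_ ?_ ((Ep F ×ˢ (Finset.univ : Finset Bool)).finite_toSet)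
    · intro q hq
      obtain ⟨⟨ha1, ha2, ha3⟩, t, ht0, htn, hb, hc⟩ := key q hq
      have hct : q.2.2 - q.2.1 = t := by rw [hc]; abel
      have hat : q.1 - q.2.1 = -t := by rw [hb]; abel
      split_ifs with hcond <;> rw [Finset.mem_coe, Finset.mem_product]
      · refine ⟨?_, Finset.mem_univ _⟩
        rw [Ep, Finset.mem_filter, Finset.mem_product]
        refine ⟨⟨(hmemF _).mpr ha2, (hmemF _).mpr ha3⟩, hcond.1, hcond.2, ?_⟩
        have : q.2.1 + (q.2.1 - q.2.2) = q.1 := (habc q hq).symm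
        rw [this]
        exact (hmemF _).mpr ha1
      · refine ⟨?_, Finset.mem_univ _⟩
        rw [Ep, Finset.mem_filter, Finset.mem_product]
        have hdlba : dl q.2.1 q.1 = ccw (-t) := by rw [dl, hat]
        have hdlbc : dl q.2.1 q.2.2 = ccw t := by rw [dl, hct]
        rcases orient ht0 htn with hor | hor
        · exfalso
          apply hcond
          rw [hdlbc]
          exact hor
        · refine ⟨⟨(hmemF _).mpr ha2, (hmemF _).mpr ha1⟩, ?_, ?_, ?_⟩
          · rw [hdlba]; exact hor.1
          · rw [hdlba]; exact hor.2
          · have : q.2.1 + (q.2.1 - q.1) = q.2.2 := (hcab q hq).symm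
            rw [this]
            exact (hmemF _).mpr ha3
    · intro q hq q' hq' h
      replace h := h
      dsimp only at h
      split_ifs at h with hc1 hc2 hc2
      · rw [Prod.mk.injEq, Prod.mk.injEq] at h
        obtain ⟨⟨e1, e2⟩, -⟩ := h
        have e0 : q.1 = q'.1 := by
          rw [habc q hq, habc q' hq', e1, e2]
        exact Prod.ext e0 (Prod.ext e1 e2)
      · rw [Prod.mk.injEq] at h
        exact absurd h.2 (by simp)
      · rw [Prod.mk.injEq] at h
        exact absurd h.2 (by simp)
      · rw [Prod.mk.injEq, Prod.mk.injEq] at h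
        obtain ⟨⟨e1, e0⟩, -⟩ := h
        have e2 : q.2.2 = q'.2.2 := by
          rw [hcab q hq, hcab q' hq', e1, e0]
        exact Prod.ext e0 (Prod.ext e1 e2)
  calc (AT A).ncard ≤ (AT A ∩ S).ncard + (AT A \ S).ncard := hdecomp
    _ ≤ n + (Ep F).card * 2 := add_le_add htriv hnontriv
    _ ≤ n + n * (n / 2) := by
        have h1 := ep_card F
        have h2 := main_sum_bound F
        rw [hFcard] at h2
        omega
    _ = n * (n / 2) + n := by omega
end
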